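/- arXiv:2305.11136 — 12 statements merged into one kernel-verified Lean document; each statement's English description precedes it below -/
import Mathlib

section
/- Let A be an n × n real matrix that is Metzler, i.e., all off-diagonal entries of A are nonnegative. Then for every t ≥ 0, every entry of the matrix exponential exp(tA) is nonnegative. -/
open Matrix

lemma exp_entry_nonneg_aux {n : ℕ} (B : Matrix (Fin n) (Fin n) ℝ)
    (hB : ∀ i j, 0 ≤ B i j) (i j : Fin n) : 0 ≤ NormedSpace.exp B i j := by
  letI : NormedRing (Matrix (Fin n) (Fin n) ℝ) := Matrix.linftyOpNormedRing
  letI : NormedAlgebra ℝ (Matrix (Fin n) (Fin n) ℝ) := Matrix.linftyOpNormedAlgebra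
  have hpow : ∀ k : ℕ, ∀ i j, 0 ≤ (B ^ k) i j := by
    intro k
    induction k with
    | zero =>
      intro i j
      simp only [pow_zero, Matrix.one_apply]
      split <;> norm_num
    | succ k ih =>
      intro i j
      rw [pow_succ, Matrix.mul_apply]
      exact Finset.sum_nonneg fun l _ => mul_nonneg (ih i l) (hB l j)
  have hsum : Summable (fun k : ℕ => (k.factorial : ℝ)⁻¹ • B ^ k) :=
    NormedSpace.expSeries_summable' B
  rw [NormedSpace.exp_eq_tsum ℝ]
  show 0 ≤ (∑' (k : ℕ), (k.factorial : ℝ)⁻¹ • B ^ k) i j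
  erw [tsum_apply hsum, tsum_apply]
  · refine tsum_nonneg fun k => ?_
    have : ((k.factorial : ℝ)⁻¹ • B ^ k) i j = (k.factorial : ℝ)⁻¹ * (B ^ k) i j := rfl
    rw [this]
    exact mul_nonneg (by positivity) (hpow k i j)
  · exact hsum.map (ContinuousLinearMap.proj (R := ℝ) (φ := fun _ : Fin n => Fin n → ℝ) i) (ContinuousLinearMap.proj i).continuous

/-- If `A` is an `n × n` real Metzler matrix (all off-diagonal entries
nonnegative), then all entries of `exp(tA)` are nonnegative for every `t ≥ 0`. -/
theorem matrix_exp_nonneg_of_metzler (n : ℕ) (A : Matrix (Fin n) (Fin n) ℝ)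
    (hA : ∀ i j, i ≠ j → 0 ≤ A i j) (t : ℝ) (ht : 0 ≤ t) :
    ∀ i j, 0 ≤ NormedSpace.exp (t • A) i j := by
  intro i j
  set c : ℝ := ∑ k, |A k k| with hc
  have hc0 : 0 ≤ c := Finset.sum_nonneg fun k _ => abs_nonneg _
  set B : Matrix (Fin n) (Fin n) ℝ := A + c • (1 : Matrix (Fin n) (Fin n) ℝ) with hBdef
  have hB : ∀ i j, 0 ≤ B i j := by
    intro a b
    by_cases hab : a = b
    · subst hab
      have h1 : B a a = A a a + c := by
        simp [hBdef, Matrix.one_apply]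
      rw [h1]
      have : |A a a| ≤ c := Finset.single_le_sum (fun k _ => abs_nonneg (A k k))
        (Finset.mem_univ a)
      linarith [neg_abs_le (A a a)]
    · have h1 : B a b = A a b := by
        simp [hBdef, Matrix.one_apply, hab]
      rw [h1]
      exact hA a b hab
  have key : NormedSpace.exp (t • B) =
      NormedSpace.exp (t • A) * NormedSpace.exp ((t * c) • (1 : Matrix (Fin n) (Fin n) ℝ)) := by
    rw [← Matrix.exp_add_of_commute]
    · congr 1
      rw [hBdef]
      simp [smul_add, smul_smul]
    · exact (Commute.one_right _).smul_right _ |>.smul_left _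
  have hexp1 : NormedSpace.exp ((t * c) • (1 : Matrix (Fin n) (Fin n) ℝ)) =
      Real.exp (t * c) • (1 : Matrix (Fin n) (Fin n) ℝ) := by
    letI : NormedRing (Matrix (Fin n) (Fin n) ℝ) := Matrix.linftyOpNormedRing
    letI : NormedAlgebra ℝ (Matrix (Fin n) (Fin n) ℝ) := Matrix.linftyOpNormedAlgebra
    have h1 : ((t * c) • (1 : Matrix (Fin n) (Fin n) ℝ)) =
        algebraMap ℝ (Matrix (Fin n) (Fin n) ℝ) (t * c) := by
      simp [Algebra.algebraMap_eq_smul_one]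
    rw [h1]
    erw [← NormedSpace.algebraMap_exp_comm (t * c)]
    rw [Real.exp_eq_exp_ℝ, Algebra.algebraMap_eq_smul_one]
  have hunit : Real.exp (t * c) • (1 : Matrix (Fin n) (Fin n) ℝ) *
      (Real.exp (t * c))⁻¹ • (1 : Matrix (Fin n) (Fin n) ℝ) = 1 := by
    rw [smul_mul_smul_comm, one_mul, mul_inv_cancel₀ (Real.exp_ne_zero _), one_smul]
  have key2 : NormedSpace.exp (t • A) =
      (Real.exp (t * c))⁻¹ • NormedSpace.exp (t • B) := by
    rw [key, hexp1, mul_smul_comm, smul_smul, inv_mul_cancel₀ (Real.exp_ne_zero _), one_smul,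
      mul_one]
  rw [key2]
  have : ((Real.exp (t * c))⁻¹ • NormedSpace.exp (t • B)) i j =
      (Real.exp (t * c))⁻¹ * NormedSpace.exp (t • B) i j := rfl
  rw [this]
  refine mul_nonneg (by positivity) ?_
  exact exp_entry_nonneg_aux _ (fun a b => mul_nonneg ht (hB a b)) i j
end

section
/- Let a₁, a₂, a₃ be pairwise distinct positive reals, g₁, g₂ > 0, and let A be the 3×3 real matrix A = [[−a₁,0,0],[g₁,−a₂,0],[0,g₂,−a₃]]. Then for every nonzero real t, exp(tA) equals the lower-triangular matrix with diagonal entries e^{−a₁t}, e^{−a₂t}, e^{−a₃t}, entry (2,1) equal to g₁ t · e[−a₁t, −a₂t], entry (3,2) equal to g₂ t · e[−a₂t, −a₃t], entry (3,1) equal to g₁ g₂ t² · e[−a₁t, −a₂t, −a₃t], and zeros above the diagonal, where e[·,·] and e[·,·,·] denote divided differences of the scalar exponential function z ↦ eᶻ. -/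
open Matrix
set_option maxHeartbeats 1000000

/-- First divided difference of `f` at `x, y`. -/
noncomputable def dd1 (f : ℝ → ℝ) (x y : ℝ) : ℝ := (f y - f x) / (y - x)

/-- Second divided difference of `f` at `x, y, z`. -/
noncomputable def dd2 (f : ℝ → ℝ) (x y z : ℝ) : ℝ := (dd1 f y z - dd1 f x y) / (z - x)

/-- Opitz formula for the matrix exponential of the IGO system matrix:
for `A = [[−a₁,0,0],[g₁,−a₂,0],[0,g₂,−a₃]]` with pairwise distinct positive `a₁,a₂,a₃`
and `g₁,g₂ > 0`, and every nonzero real `t`, `exp(tA)` is the lower-triangular matrix with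
diagonal entries `e^{−aᵢt}`, entry (2,1) equal to `g₁ t · e[−a₁t, −a₂t]`, entry (3,2) equal
to `g₂ t · e[−a₂t, −a₃t]` and entry (3,1) equal to `g₁ g₂ t² · e[−a₁t, −a₂t, −a₃t]`. -/
theorem matrix_exp_opitz (a₁ a₂ a₃ g₁ g₂ : ℝ)
    (ha₁ : 0 < a₁) (ha₂ : 0 < a₂) (ha₃ : 0 < a₃)
    (h12 : a₁ ≠ a₂) (h13 : a₁ ≠ a₃) (h23 : a₂ ≠ a₃)
    (hg₁ : 0 < g₁) (hg₂ : 0 < g₂)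
    (A : Matrix (Fin 3) (Fin 3) ℝ)
    (hA : A = !![-a₁, 0, 0; g₁, -a₂, 0; 0, g₂, -a₃])
    (t : ℝ) (ht : t ≠ 0) :
    NormedSpace.exp (t • A) =
      !![Real.exp (-a₁ * t), 0, 0;
         g₁ * t * dd1 Real.exp (-a₁ * t) (-a₂ * t), Real.exp (-a₂ * t), 0;
         g₁ * g₂ * t ^ 2 * dd2 Real.exp (-a₁ * t) (-a₂ * t) (-a₃ * t),
           g₂ * t * dd1 Real.exp (-a₂ * t) (-a₃ * t), Real.exp (-a₃ * t)] := by
  have hb : a₂ - a₁ ≠ 0 := sub_ne_zero.mpr (Ne.symm h12)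
  have hc : a₃ - a₁ ≠ 0 := sub_ne_zero.mpr (Ne.symm h13)
  have hd : a₃ - a₂ ≠ 0 := sub_ne_zero.mpr (Ne.symm h23)
  set P : Matrix (Fin 3) (Fin 3) ℝ :=
    !![1, 0, 0; g₁/(a₂-a₁), 1, 0; g₁*g₂/((a₂-a₁)*(a₃-a₁)), g₂/(a₃-a₂), 1] with hP
  set Q : Matrix (Fin 3) (Fin 3) ℝ :=
    !![1, 0, 0; -g₁/(a₂-a₁), 1, 0; g₁*g₂/((a₃-a₂)*(a₃-a₁)), -g₂/(a₃-a₂), 1] with hQ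
  have hPQ : P * Q = 1 := by
    ext i j
    fin_cases i <;> fin_cases j <;>
      · simp [hP, hQ, Matrix.mul_apply, Fin.sum_univ_three, Matrix.one_apply]
        try field_simp
        try ring
  have hQP : Q * P = 1 := by
    ext i j
    fin_cases i <;> fin_cases j <;>
      · simp [hP, hQ, Matrix.mul_apply, Fin.sum_univ_three, Matrix.one_apply]
        try field_simp
        try ring
  have hdiag : ∀ x y z : ℝ, Matrix.diagonal ![x, y, z] = !![x,0,0; 0,y,0; 0,0,z] := by
    intro x y z
    ext i j
    fin_cases i <;> fin_cases j <;>
      simp [Matrix.diagonal_apply, Matrix.vecHead, Matrix.vecTail]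
  have hD : t • A = P * Matrix.diagonal ![-a₁*t, -a₂*t, -a₃*t] * Q := by
    rw [hdiag]
    ext i j
    fin_cases i <;> fin_cases j <;>
      · simp [hA, hP, hQ, Matrix.mul_apply, Fin.sum_univ_three, Matrix.smul_apply]
        try field_simp
        try ring
  have hconj : NormedSpace.exp (P * Matrix.diagonal ![-a₁*t, -a₂*t, -a₃*t] * Q)
      = P * NormedSpace.exp (Matrix.diagonal ![-a₁*t, -a₂*t, -a₃*t]) * Q :=
    Matrix.exp_units_conj ⟨P, Q, hPQ, hQP⟩ _
  have hexp : NormedSpace.exp (![-a₁*t, -a₂*t, -a₃*t] : Fin 3 → ℝ)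
      = ![Real.exp (-a₁*t), Real.exp (-a₂*t), Real.exp (-a₃*t)] := by
    rw [Pi.exp_def]
    funext i
    fin_cases i <;> simp [Real.exp_eq_exp_ℝ]
  rw [hD, hconj, Matrix.exp_diagonal, hexp, hdiag]
  have e12 : -a₂ * t - -a₁ * t ≠ 0 := by
    have : -a₂ * t - -a₁ * t = -((a₂ - a₁) * t) := by ring
    rw [this]; exact neg_ne_zero.mpr (mul_ne_zero hb ht)
  have e23 : -a₃ * t - -a₂ * t ≠ 0 := by
    have : -a₃ * t - -a₂ * t = -((a₃ - a₂) * t) := by ring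
    rw [this]; exact neg_ne_zero.mpr (mul_ne_zero hd ht)
  have e13 : -a₃ * t - -a₁ * t ≠ 0 := by
    have : -a₃ * t - -a₁ * t = -((a₃ - a₁) * t) := by ring
    rw [this]; exact neg_ne_zero.mpr (mul_ne_zero hc ht)
  have n12 : a₁ - a₂ ≠ 0 := sub_ne_zero.mpr h12
  have n13 : a₁ - a₃ ≠ 0 := sub_ne_zero.mpr h13
  have n23 : a₂ - a₃ ≠ 0 := sub_ne_zero.mpr h23
  have D12 : dd1 Real.exp (-a₁*t) (-a₂*t)
      = (Real.exp (-a₂*t) - Real.exp (-a₁*t)) / ((a₁-a₂)*t) := by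
    unfold dd1; congr 1; ring
  have D23 : dd1 Real.exp (-a₂*t) (-a₃*t)
      = (Real.exp (-a₃*t) - Real.exp (-a₂*t)) / ((a₂-a₃)*t) := by
    unfold dd1; congr 1; ring
  have D2 : dd2 Real.exp (-a₁*t) (-a₂*t) (-a₃*t)
      = ((Real.exp (-a₃*t) - Real.exp (-a₂*t)) / ((a₂-a₃)*t)
          - (Real.exp (-a₂*t) - Real.exp (-a₁*t)) / ((a₁-a₂)*t)) / ((a₁-a₃)*t) := by
    unfold dd2; rw [D12, D23]; congr 1; ring
  rw [D12, D23, D2]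
  ext i j
  fin_cases i <;> fin_cases j <;>
    · simp [hP, hQ, Matrix.mul_apply, Fin.sum_univ_three]
      try field_simp
      try ring
end

section
/- Let a₁, a₂, a₃ be pairwise distinct positive reals, g₁, g₂ > 0, A = [[−a₁,0,0],[g₁,−a₂,0],[0,g₂,−a₃]], B = (1,0,0)ᵀ, and C = (0,0,1). Then for every T > 0 the matrix exp(−T·A) − I is invertible, and the scalar function g(T) := C · (exp(−T·A) − I)⁻¹ · B is strictly positive and strictly decreasing on (0,∞). -/
open Matrix

open Real Set

/-- auxiliary: first derivative of `a ↦ (exp (T*a) - 1)⁻¹`. -/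
noncomputable def igoW1 (T a : ℝ) : ℝ := -(Real.exp (T*a) * T) / (Real.exp (T*a) - 1)^2

/-- auxiliary: second derivative of `a ↦ (exp (T*a) - 1)⁻¹`. -/
noncomputable def igoK (T a : ℝ) : ℝ :=
  T^2 * Real.exp (T*a) * (Real.exp (T*a) + 1) / (Real.exp (T*a) - 1)^3

noncomputable def igoF (x : ℝ) : ℝ := x^2 * Real.exp x * (Real.exp x + 1) / (Real.exp x - 1)^3

lemma igo_hasDerivAt_u (T a : ℝ) :
    HasDerivAt (fun s => Real.exp (T*s) - 1) (Real.exp (T*a) * T) a := by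
  have h : HasDerivAt (fun s : ℝ => T*s) T a := by
    simpa using (hasDerivAt_id a).const_mul T
  exact h.exp.sub_const 1

lemma igo_exp_sub_one_ne {T a : ℝ} (h : T*a ≠ 0) : Real.exp (T*a) - 1 ≠ 0 :=
  sub_ne_zero.2 fun hh => h ((Real.exp_eq_one_iff _).mp hh)

lemma igo_hasDerivAt_w {T a : ℝ} (h : T*a ≠ 0) :
    HasDerivAt (fun s => (Real.exp (T*s) - 1)⁻¹) (igoW1 T a) a :=
  (igo_hasDerivAt_u T a).inv (igo_exp_sub_one_ne h)

lemma igo_hasDerivAt_w1 {T a : ℝ} (h : T*a ≠ 0) :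
    HasDerivAt (igoW1 T) (igoK T a) a := by
  have hne := igo_exp_sub_one_ne h
  have hu := igo_hasDerivAt_u T a
  have hm : HasDerivAt (fun s : ℝ => T*s) T a := by
    simpa using (hasDerivAt_id a).const_mul T
  have hN : HasDerivAt (fun s => -(Real.exp (T*s) * T)) (-(Real.exp (T*a) * T * T)) a :=
    (hm.exp.mul_const T).neg
  have hD : HasDerivAt (fun s => (Real.exp (T*s) - 1)^2)
      ((2:ℕ) * (Real.exp (T*a) - 1)^(2-1) * (Real.exp (T*a) * T)) a := hu.pow 2
  have hdiv := hN.div hD (pow_ne_zero 2 hne)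
  refine hdiv.congr_deriv ?_
  unfold igoK
  field_simp
  ring

lemma igo_strictConvexOn_aux {φ φ' φ'' : ℝ → ℝ}
    (h1 : ∀ x ∈ Ioi (0:ℝ), HasDerivAt φ (φ' x) x)
    (h2 : ∀ x ∈ Ioi (0:ℝ), HasDerivAt φ' (φ'' x) x)
    (h3 : ∀ x ∈ Ioi (0:ℝ), 0 < φ'' x) :
    StrictConvexOn ℝ (Ioi 0) φ := by
  apply strictConvexOn_of_deriv2_pos (convex_Ioi 0)
    (fun x hx => (h1 x hx).continuousAt.continuousWithinAt)
  intro x hx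
  rw [interior_Ioi] at hx
  have hev : deriv φ =ᶠ[nhds x] φ' := by
    filter_upwards [isOpen_Ioi.mem_nhds hx] with y hy
    exact (h1 y hy).deriv
  have h4 : deriv (deriv φ) x = φ'' x := by
    rw [hev.deriv_eq]
    exact (h2 x hx).deriv
  show 0 < deriv (deriv φ) x
  rw [h4]; exact h3 x hx

lemma igo_dd_pos {φ : ℝ → ℝ} (hφ : StrictConvexOn ℝ (Ioi 0) φ) {a b c : ℝ}
    (ha : 0 < a) (hab : a < b) (hbc : b < c) :
    0 < φ a / ((b-a)*(c-a)) - φ b / ((b-a)*(c-b)) + φ c / ((c-b)*(c-a)) := by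
  have hslope := hφ.slope_strict_mono_adjacent (mem_Ioi.2 ha)
    (mem_Ioi.2 (ha.trans (hab.trans hbc))) hab hbc
  have h1 : (0:ℝ) < b - a := by linarith
  have h2 : (0:ℝ) < c - b := by linarith
  have h3 : (0:ℝ) < c - a := by linarith
  have key : φ a / ((b-a)*(c-a)) - φ b / ((b-a)*(c-b)) + φ c / ((c-b)*(c-a))
      = ((φ c - φ b)/(c-b) - (φ b - φ a)/(b-a)) / (c-a) := by
    field_simp
    ring
  rw [key]
  exact div_pos (sub_pos.2 hslope) h3

lemma igo_core_ineq {x : ℝ} (hx : 0 < x) :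
    2 * Real.exp x ^ 2 - 2 < x * (Real.exp x ^ 2 + 4 * Real.exp x + 1) := by
  -- general monotonicity helper
  have mono : ∀ (F F' : ℝ → ℝ), (∀ y : ℝ, HasDerivAt F (F' y) y) →
      (∀ y : ℝ, 0 < y → 0 < F' y) → ∀ y : ℝ, 0 < y → F 0 < F y := by
    intro F F' hF hF' y hy
    have hsm : StrictMonoOn F (Ici 0) := by
      apply strictMonoOn_of_deriv_pos (convex_Ici 0)
        (fun z _ => (hF z).continuousAt.continuousWithinAt)
      intro z hz
      rw [interior_Ici] at hz
      rw [(hF z).deriv]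
      exact hF' z hz
    exact hsm self_mem_Ici (le_of_lt hy) hy
  -- second layer q1
  have hq1 : ∀ y : ℝ, 0 < y →
      (0:ℝ) < 2*y*Real.exp y^2 + 4*y*Real.exp y + 4*Real.exp y + 1 - 3*Real.exp y^2 := by
    have hd : ∀ y : ℝ, HasDerivAt
        (fun y => 2*y*Real.exp y^2 + 4*y*Real.exp y + 4*Real.exp y + 1 - 3*Real.exp y^2)
        (4*y*Real.exp y^2 + 4*y*Real.exp y + 8*Real.exp y - 4*Real.exp y^2) y := by
      intro y
      have h1 := Real.hasDerivAt_exp y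
      have h2 : HasDerivAt (fun y : ℝ => Real.exp y ^ 2)
          ((2:ℕ) * Real.exp y ^ (2-1) * Real.exp y) y := h1.pow 2
      have h3 : HasDerivAt (fun y : ℝ => 2*y) 2 y := by
        simpa using (hasDerivAt_id y).const_mul 2
      have h4 : HasDerivAt (fun y : ℝ => 4*y) 4 y := by
        simpa using (hasDerivAt_id y).const_mul 4
      have := ((((h3.mul h2).add (h4.mul h1)).add (h1.const_mul 4)).add_const 1).sub
        (h2.const_mul 3)
      refine this.congr_deriv ?_
      push_cast
      ring
    have hd' : ∀ y : ℝ, 0 < y →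
        (0:ℝ) < 4*y*Real.exp y^2 + 4*y*Real.exp y + 8*Real.exp y - 4*Real.exp y^2 := by
      intro y hy
      have he : (0:ℝ) < Real.exp y := Real.exp_pos y
      rcases le_or_gt 1 y with h|h
      · nlinarith [sq_nonneg (Real.exp y)]
      · have key : (1 - y) * Real.exp y ^ 2 < Real.exp y := by
          have h5 : 1 - y < Real.exp (-y) := by
            have := Real.add_one_lt_exp (x := -y) (by linarith)
            linarith
          have h6 : Real.exp (-y) * Real.exp y ^ 2 = Real.exp y := by
            rw [pow_two, ← mul_assoc, ← Real.exp_add]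
            simp
          calc (1 - y) * Real.exp y ^ 2 < Real.exp (-y) * Real.exp y ^ 2 := by
                apply mul_lt_mul_of_pos_right h5 (by positivity)
            _ = Real.exp y := h6
        nlinarith
    intro y hy
    have := mono _ _ hd hd' y hy
    simp only [Real.exp_zero] at this
    nlinarith
  -- first layer Q
  have hQd : ∀ y : ℝ, HasDerivAt
      (fun y => y * (Real.exp y ^ 2 + 4 * Real.exp y + 1) + 2 - 2 * Real.exp y ^ 2)
      (2*y*Real.exp y^2 + 4*y*Real.exp y + 4*Real.exp y + 1 - 3*Real.exp y^2) y := by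
    intro y
    have h1 := Real.hasDerivAt_exp y
    have h2 : HasDerivAt (fun y : ℝ => Real.exp y ^ 2)
        ((2:ℕ) * Real.exp y ^ (2-1) * Real.exp y) y := h1.pow 2
    have := (((hasDerivAt_id y).mul ((h2.add (h1.const_mul 4)).add_const 1)).add_const 2).sub
      (h2.const_mul 2)
    simp only [id_eq] at this
    refine this.congr_deriv ?_
    push_cast
    simp only [Pi.add_apply, Pi.mul_apply]
    ring
  have := mono _ _ hQd hq1 x hx
  simp only [Real.exp_zero] at this
  nlinarith

lemma igo_f_anti : StrictAntiOn igoF (Ioi 0) := by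
  have hder : ∀ x ∈ Ioi (0:ℝ), HasDerivAt igoF
      ((((2*x*Real.exp x + x^2*Real.exp x) * (Real.exp x + 1) + x^2*Real.exp x*Real.exp x)
          * (Real.exp x - 1)^3
        - x^2*Real.exp x*(Real.exp x + 1) * (3 * (Real.exp x - 1)^2 * Real.exp x))
        / ((Real.exp x - 1)^3)^2) x := by
    intro x hx
    have hx0 : (0:ℝ) < x := hx
    have h1 := Real.hasDerivAt_exp x
    have hne : Real.exp x - 1 ≠ 0 := by
      have : (1:ℝ) < Real.exp x := Real.one_lt_exp_iff.2 hx0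
      linarith
    have hN : HasDerivAt (fun x : ℝ => x^2*Real.exp x*(Real.exp x + 1))
        ((2*x*Real.exp x + x^2*Real.exp x) * (Real.exp x + 1) + x^2*Real.exp x*Real.exp x) x := by
      have hp : HasDerivAt (fun x : ℝ => x^2) ((2:ℕ)*x^(2-1)) x := hasDerivAt_pow 2 x
      have := (hp.mul h1).mul (h1.add_const 1)
      refine this.congr_deriv ?_
      push_cast
      simp only [Pi.add_apply, Pi.mul_apply]
      ring
    have hD : HasDerivAt (fun x : ℝ => (Real.exp x - 1)^3)
        (3 * (Real.exp x - 1)^2 * Real.exp x) x := by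
      have := (h1.sub_const 1).pow 3
      refine this.congr_deriv ?_
      norm_num
    exact hN.div hD (pow_ne_zero 3 hne)
  apply strictAntiOn_of_deriv_neg (convex_Ioi 0)
    (fun x hx => (hder x hx).continuousAt.continuousWithinAt)
  intro x hx
  rw [interior_Ioi] at hx
  rw [(hder x hx).deriv]
  have hx0 : (0:ℝ) < x := hx
  have he : (1:ℝ) < Real.exp x := Real.one_lt_exp_iff.2 hx0
  have hcore := igo_core_ineq hx0
  apply div_neg_of_neg_of_pos
  · have key : ((2*x*Real.exp x + x^2*Real.exp x) * (Real.exp x + 1) + x^2*Real.exp x*Real.exp x)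
          * (Real.exp x - 1)^3
        - x^2*Real.exp x*(Real.exp x + 1) * (3 * (Real.exp x - 1)^2 * Real.exp x)
        = (Real.exp x - 1)^2 * (x * Real.exp x) *
          (2 * Real.exp x ^ 2 - 2 - x * (Real.exp x ^ 2 + 4 * Real.exp x + 1)) := by
      ring
    rw [key]
    apply mul_neg_of_pos_of_neg
    · exact mul_pos (pow_pos (by linarith) 2) (mul_pos hx0 (Real.exp_pos x))
    · linarith
  · exact pow_pos (pow_pos (by linarith) 3) 2

lemma igoK_eq {T a : ℝ} (ha : a ≠ 0) : igoK T a = igoF (T*a) / a^2 := by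
  unfold igoK igoF
  rw [eq_div_iff (pow_ne_zero 2 ha), div_mul_eq_mul_div]
  congr 1
  ring

lemma igoK_pos {T a : ℝ} (hT : 0 < T) (ha : 0 < a) : 0 < igoK T a := by
  have he : (1:ℝ) < Real.exp (T*a) := Real.one_lt_exp_iff.2 (mul_pos hT ha)
  unfold igoK
  apply div_pos
  · apply mul_pos (mul_pos (pow_pos hT 2) (Real.exp_pos _))
    linarith
  · exact pow_pos (by linarith) 3

lemma igo_sconv_w {T : ℝ} (hT : 0 < T) :
    StrictConvexOn ℝ (Ioi 0) (fun a => (Real.exp (T*a) - 1)⁻¹) :=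
  igo_strictConvexOn_aux
    (fun x hx => igo_hasDerivAt_w (ne_of_gt (mul_pos hT hx)))
    (fun x hx => igo_hasDerivAt_w1 (ne_of_gt (mul_pos hT hx)))
    (fun x hx => igoK_pos hT hx)

lemma igo_sconv_pair {T₁ T₂ : ℝ} (h1 : 0 < T₁) (h12 : T₁ < T₂) :
    StrictConvexOn ℝ (Ioi 0)
      (fun a => (Real.exp (T₁*a) - 1)⁻¹ - (Real.exp (T₂*a) - 1)⁻¹) := by
  have h2 : 0 < T₂ := h1.trans h12
  exact igo_strictConvexOn_aux
    (φ' := fun a => igoW1 T₁ a - igoW1 T₂ a)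
    (φ'' := fun a => igoK T₁ a - igoK T₂ a)
    (fun x hx => (igo_hasDerivAt_w (ne_of_gt (mul_pos h1 hx))).sub
      (igo_hasDerivAt_w (ne_of_gt (mul_pos h2 hx))))
    (fun x hx => (igo_hasDerivAt_w1 (ne_of_gt (mul_pos h1 hx))).sub
      (igo_hasDerivAt_w1 (ne_of_gt (mul_pos h2 hx))))
    (fun x hx => by
      have hx0 : (0:ℝ) < x := hx
      have hlt := igo_f_anti (mem_Ioi.2 (mul_pos h1 hx0)) (mem_Ioi.2 (mul_pos h2 hx0))
        (by nlinarith)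
      rw [igoK_eq (ne_of_gt hx0), igoK_eq (ne_of_gt hx0)]
      exact sub_pos.2 ((div_lt_div_iff_of_pos_right (pow_pos hx0 2)).2 hlt))

noncomputable def igoS (a b c T : ℝ) : ℝ :=
  (Real.exp (T*a) - 1)⁻¹ / ((b-a)*(c-a)) - (Real.exp (T*b) - 1)⁻¹ / ((b-a)*(c-b))
    + (Real.exp (T*c) - 1)⁻¹ / ((c-b)*(c-a))

lemma igoS_pos {a b c T : ℝ} (ha : 0 < a) (hab : a < b) (hbc : b < c) (hT : 0 < T) :
    0 < igoS a b c T :=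
  igo_dd_pos (igo_sconv_w hT) ha hab hbc

lemma igoS_anti {a b c T₁ T₂ : ℝ} (ha : 0 < a) (hab : a < b) (hbc : b < c)
    (h1 : 0 < T₁) (h12 : T₁ < T₂) : igoS a b c T₂ < igoS a b c T₁ := by
  have h := igo_dd_pos (igo_sconv_pair h1 h12) ha hab hbc
  have key : ((Real.exp (T₁*a) - 1)⁻¹ - (Real.exp (T₂*a) - 1)⁻¹) / ((b-a)*(c-a))
      - ((Real.exp (T₁*b) - 1)⁻¹ - (Real.exp (T₂*b) - 1)⁻¹) / ((b-a)*(c-b))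
      + ((Real.exp (T₁*c) - 1)⁻¹ - (Real.exp (T₂*c) - 1)⁻¹) / ((c-b)*(c-a))
      = igoS a b c T₁ - igoS a b c T₂ := by
    unfold igoS
    ring
  rw [key] at h
  linarith

lemma igoS_swap₁ {a b c : ℝ} (hab : a ≠ b) (hac : a ≠ c) (hbc : b ≠ c) (T : ℝ) :
    igoS a b c T = igoS b a c T := by
  have h1 : b - a ≠ 0 := sub_ne_zero.2 (Ne.symm hab)
  have h2 : c - a ≠ 0 := sub_ne_zero.2 (Ne.symm hac)
  have h3 : c - b ≠ 0 := sub_ne_zero.2 (Ne.symm hbc)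
  have h1' : a - b ≠ 0 := sub_ne_zero.2 hab
  unfold igoS
  generalize (Real.exp (T*a) - 1)⁻¹ = u
  generalize (Real.exp (T*b) - 1)⁻¹ = v
  generalize (Real.exp (T*c) - 1)⁻¹ = w
  field_simp
  ring

lemma igoS_swap₂ {a b c : ℝ} (hab : a ≠ b) (hac : a ≠ c) (hbc : b ≠ c) (T : ℝ) :
    igoS a b c T = igoS a c b T := by
  have h1 : b - a ≠ 0 := sub_ne_zero.2 (Ne.symm hab)
  have h2 : c - a ≠ 0 := sub_ne_zero.2 (Ne.symm hac)
  have h3 : c - b ≠ 0 := sub_ne_zero.2 (Ne.symm hbc)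
  have h3' : b - c ≠ 0 := sub_ne_zero.2 hbc
  unfold igoS
  generalize (Real.exp (T*a) - 1)⁻¹ = u
  generalize (Real.exp (T*b) - 1)⁻¹ = v
  generalize (Real.exp (T*c) - 1)⁻¹ = w
  field_simp
  ring

lemma igoS_sort {a b c : ℝ} (ha : 0 < a) (hb : 0 < b) (hc : 0 < c)
    (hab : a ≠ b) (hac : a ≠ c) (hbc : b ≠ c) :
    ∃ x y z : ℝ, 0 < x ∧ x < y ∧ y < z ∧ ∀ T, igoS a b c T = igoS x y z T := by
  rcases lt_trichotomy a b with h1 | h1 | h1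
  · rcases lt_trichotomy b c with h2 | h2 | h2
    · exact ⟨a, b, c, ha, h1, h2, fun T => rfl⟩
    · exact absurd h2 hbc
    · rcases lt_trichotomy a c with h3 | h3 | h3
      · -- a < c < b
        exact ⟨a, c, b, ha, h3, h2, fun T => igoS_swap₂ hab hac hbc T⟩
      · exact absurd h3 hac
      · -- c < a < b
        exact ⟨c, a, b, hc, h3, h1, fun T => by
          rw [igoS_swap₂ hab hac hbc T, igoS_swap₁ hac hab (Ne.symm hbc) T]⟩
  · exact absurd h1 hab
  · rcases lt_trichotomy a c with h2 | h2 | h2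
    · -- b < a < c
      exact ⟨b, a, c, hb, h1, h2, fun T => igoS_swap₁ hab hac hbc T⟩
    · exact absurd h2 hac
    · rcases lt_trichotomy b c with h3 | h3 | h3
      · -- b < c < a
        exact ⟨b, c, a, hb, h3, h2, fun T => by
          rw [igoS_swap₁ hab hac hbc T, igoS_swap₂ (Ne.symm hab) hbc hac T]⟩
      · exact absurd h3 hbc
      · -- c < b < a
        exact ⟨c, b, a, hc, h3, h1, fun T => by
          rw [igoS_swap₁ hab hac hbc T, igoS_swap₂ (Ne.symm hab) hbc hac T,
            igoS_swap₁ hbc (Ne.symm hab) (Ne.symm hac) T]⟩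

open Matrix

lemma igo_vec3_comp (f : ℝ → ℝ) (x y z : ℝ) : (fun i => f (![x,y,z] i)) = ![f x, f y, f z] := by
  funext i; fin_cases i <;> simp

lemma igo_diag3 (x y z : ℝ) :
    Matrix.diagonal ![x,y,z] = !![x,0,0; 0,y,0; 0,0,z] := by
  ext i j
  fin_cases i <;> fin_cases j <;>
    simp [Matrix.diagonal_apply, Matrix.vecHead, Matrix.vecTail]

set_option maxHeartbeats 2000000 in
/-- For the IGO system matrix `A = [[−a₁,0,0],[g₁,−a₂,0],[0,g₂,−a₃]]` with
pairwise distinct positive `a₁,a₂,a₃` and `g₁,g₂ > 0`: for every `T > 0` the matrix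
`exp(−T·A) − I` is invertible, and the scalar function
`g(T) := C·(exp(−T·A) − I)⁻¹·B` (the (3,1) entry of the inverse) is strictly positive
and strictly decreasing on `(0,∞)`. -/
theorem igo_transfer_pos_strict_anti (a₁ a₂ a₃ g₁ g₂ : ℝ)
    (ha₁ : 0 < a₁) (ha₂ : 0 < a₂) (ha₃ : 0 < a₃)
    (h12 : a₁ ≠ a₂) (h13 : a₁ ≠ a₃) (h23 : a₂ ≠ a₃)
    (hg₁ : 0 < g₁) (hg₂ : 0 < g₂)
    (A : Matrix (Fin 3) (Fin 3) ℝ)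
    (hA : A = !![-a₁, 0, 0; g₁, -a₂, 0; 0, g₂, -a₃]) :
    (∀ T : ℝ, 0 < T → IsUnit (NormedSpace.exp ((-T) • A) - 1)) ∧
    (∀ T : ℝ, 0 < T → 0 < (NormedSpace.exp ((-T) • A) - 1)⁻¹ 2 0) ∧
    StrictAntiOn (fun T : ℝ => (NormedSpace.exp ((-T) • A) - 1)⁻¹ 2 0) (Set.Ioi 0) := by
  subst hA
  have h21 : a₂ - a₁ ≠ 0 := sub_ne_zero.2 (Ne.symm h12)
  have h31 : a₃ - a₁ ≠ 0 := sub_ne_zero.2 (Ne.symm h13)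
  have h32 : a₃ - a₂ ≠ 0 := sub_ne_zero.2 (Ne.symm h23)
  obtain ⟨p, hp⟩ : ∃ p : ℝ, p = g₁/(a₂-a₁) := ⟨_, rfl⟩
  obtain ⟨r, hr⟩ : ∃ r : ℝ, r = g₂/(a₃-a₂) := ⟨_, rfl⟩
  obtain ⟨q, hq⟩ : ∃ q : ℝ, q = g₁*g₂/((a₂-a₁)*(a₃-a₁)) := ⟨_, rfl⟩
  have hpe : p * (a₂ - a₁) = g₁ := by rw [hp]; field_simp
  have hre : r * (a₃ - a₂) = g₂ := by rw [hr]; field_simp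
  have hqe : q * (a₃ - a₁) = p * g₂ := by rw [hq, hp]; field_simp
  obtain ⟨P, hPdef⟩ : ∃ P : Matrix (Fin 3) (Fin 3) ℝ, P = !![1,0,0; p,1,0; q,r,1] := ⟨_, rfl⟩
  obtain ⟨Q, hQdef⟩ : ∃ Q : Matrix (Fin 3) (Fin 3) ℝ, Q = !![1,0,0; -p,1,0; p*r-q,-r,1] :=
    ⟨_, rfl⟩
  have hPQ : P * Q = 1 := by
    subst hPdef hQdef
    ext i j
    fin_cases i <;> fin_cases j <;>
      · simp [Matrix.mul_apply, Fin.sum_univ_three, Matrix.one_apply,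
          Matrix.vecHead, Matrix.vecTail]
        try ring
  have hQP : Q * P = 1 := by
    subst hPdef hQdef
    ext i j
    fin_cases i <;> fin_cases j <;>
      · simp [Matrix.mul_apply, Fin.sum_univ_three, Matrix.one_apply,
          Matrix.vecHead, Matrix.vecTail]
        try ring
  have hPu : IsUnit P := (Matrix.isUnit_iff_isUnit_det P).2 (by
    have : P.det = 1 := by subst hPdef; simp [Matrix.det_fin_three]
    rw [this]; exact isUnit_one)
  have hPinv : P⁻¹ = Q := Matrix.inv_eq_right_inv hPQ
  have hv : ∀ T : ℝ, (-T) • (!![-a₁,0,0; g₁,-a₂,0; 0,g₂,-a₃] : Matrix (Fin 3) (Fin 3) ℝ)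
      = P * !![T*a₁,0,0; 0,T*a₂,0; 0,0,T*a₃] * Q := by
    intro T
    subst hPdef hQdef
    ext i j
    fin_cases i <;> fin_cases j <;>
      simp [Matrix.mul_apply, Fin.sum_univ_three, Matrix.vecHead, Matrix.vecTail]
    · linear_combination T * hpe
    · linear_combination T * hqe - T * p * hre
    · linear_combination T * hre
  have hexp : ∀ T : ℝ,
      NormedSpace.exp ((-T) • (!![-a₁,0,0; g₁,-a₂,0; 0,g₂,-a₃] : Matrix (Fin 3) (Fin 3) ℝ))
      = P * !![Real.exp (T*a₁),0,0; 0,Real.exp (T*a₂),0; 0,0,Real.exp (T*a₃)] * Q := by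
    intro T
    have hpi : NormedSpace.exp (![T*a₁,T*a₂,T*a₃] : Fin 3 → ℝ)
        = ![Real.exp (T*a₁), Real.exp (T*a₂), Real.exp (T*a₃)] := by
      rw [Pi.exp_def]
      rw [show (fun i => NormedSpace.exp ((![T*a₁,T*a₂,T*a₃] : Fin 3 → ℝ) i))
        = fun i => Real.exp (![T*a₁,T*a₂,T*a₃] i) from by
          funext i; exact (congrFun Real.exp_eq_exp_ℝ _).symm]
      exact igo_vec3_comp Real.exp _ _ _
    rw [hv T, ← igo_diag3, ← hPinv, Matrix.exp_conj P _ hPu, Matrix.exp_diagonal, hpi,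
      hPinv, igo_diag3]
  have hsub : ∀ T : ℝ,
      NormedSpace.exp ((-T) • (!![-a₁,0,0; g₁,-a₂,0; 0,g₂,-a₃] : Matrix (Fin 3) (Fin 3) ℝ)) - 1
      = P * !![Real.exp (T*a₁)-1,0,0; 0,Real.exp (T*a₂)-1,0; 0,0,Real.exp (T*a₃)-1] * Q := by
    intro T
    rw [hexp T]
    subst hPdef hQdef
    ext i j
    fin_cases i <;> fin_cases j <;>
      · simp [Matrix.mul_apply, Matrix.sub_apply, Fin.sum_univ_three, Matrix.one_apply,
          Matrix.vecHead, Matrix.vecTail]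
        try ring
  have hne : ∀ {T s : ℝ}, 0 < T → 0 < s → Real.exp (T*s) - 1 ≠ 0 := by
    intro T s hT hs
    have : (1:ℝ) < Real.exp (T*s) := Real.one_lt_exp_iff.2 (mul_pos hT hs)
    linarith
  have hunit : ∀ T : ℝ, 0 < T →
      IsUnit (NormedSpace.exp ((-T) • (!![-a₁,0,0; g₁,-a₂,0; 0,g₂,-a₃] :
        Matrix (Fin 3) (Fin 3) ℝ)) - 1) := by
    intro T hT
    rw [hsub T]
    rw [Matrix.isUnit_iff_isUnit_det]
    refine isUnit_iff_ne_zero.2 ?_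
    rw [Matrix.det_mul, Matrix.det_mul]
    have d1 : (P.det) = 1 := by subst hPdef; simp [Matrix.det_fin_three]
    have d2 : (Q.det) = 1 := by subst hQdef; simp [Matrix.det_fin_three]
    have d3 : (!![Real.exp (T*a₁)-1,0,0; 0,Real.exp (T*a₂)-1,0; 0,0,Real.exp (T*a₃)-1] :
        Matrix (Fin 3) (Fin 3) ℝ).det
        = (Real.exp (T*a₁)-1) * ((Real.exp (T*a₂)-1) * (Real.exp (T*a₃)-1)) := by
      simp [Matrix.det_fin_three]
      ring
    rw [d1, d2, d3, one_mul, mul_one]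
    exact mul_ne_zero (hne hT ha₁) (mul_ne_zero (hne hT ha₂) (hne hT ha₃))
  have hinv : ∀ T : ℝ, 0 < T →
      (NormedSpace.exp ((-T) • (!![-a₁,0,0; g₁,-a₂,0; 0,g₂,-a₃] :
        Matrix (Fin 3) (Fin 3) ℝ)) - 1)⁻¹ 2 0 = g₁*g₂*igoS a₁ a₂ a₃ T := by
    intro T hT
    obtain ⟨u₁, hu₁⟩ : ∃ u : ℝ, u = Real.exp (T*a₁) - 1 := ⟨_, rfl⟩
    obtain ⟨u₂, hu₂⟩ : ∃ u : ℝ, u = Real.exp (T*a₂) - 1 := ⟨_, rfl⟩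
    obtain ⟨u₃, hu₃⟩ : ∃ u : ℝ, u = Real.exp (T*a₃) - 1 := ⟨_, rfl⟩
    have hn₁ : u₁ ≠ 0 := hu₁ ▸ hne hT ha₁
    have hn₂ : u₂ ≠ 0 := hu₂ ▸ hne hT ha₂
    have hn₃ : u₃ ≠ 0 := hu₃ ▸ hne hT ha₃
    have hkey : (P * !![u₁,0,0; 0,u₂,0; 0,0,u₃] * Q) * (P * !![u₁⁻¹,0,0; 0,u₂⁻¹,0; 0,0,u₃⁻¹] * Q)
        = 1 := by
      have e1 : (P * !![u₁,0,0; 0,u₂,0; 0,0,u₃] * Q) * (P * !![u₁⁻¹,0,0; 0,u₂⁻¹,0; 0,0,u₃⁻¹] * Q)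
          = P * (!![u₁,0,0; 0,u₂,0; 0,0,u₃] * !![u₁⁻¹,0,0; 0,u₂⁻¹,0; 0,0,u₃⁻¹]) * Q := by
        rw [← Matrix.mul_assoc, ← Matrix.mul_assoc]
        rw [Matrix.mul_assoc (P * !![u₁,0,0; 0,u₂,0; 0,0,u₃]) Q P, hQP, mul_one,
          Matrix.mul_assoc P]
      have e2 : (!![u₁,0,0; 0,u₂,0; 0,0,u₃] * !![u₁⁻¹,0,0; 0,u₂⁻¹,0; 0,0,u₃⁻¹] :
          Matrix (Fin 3) (Fin 3) ℝ) = 1 := by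
        ext i j
        fin_cases i <;> fin_cases j <;>
          · simp [Matrix.mul_apply, Fin.sum_univ_three, Matrix.one_apply,
              Matrix.vecHead, Matrix.vecTail]
            try field_simp
      rw [e1, e2, mul_one, hPQ]
    have hfold : NormedSpace.exp ((-T) • (!![-a₁,0,0; g₁,-a₂,0; 0,g₂,-a₃] :
        Matrix (Fin 3) (Fin 3) ℝ)) - 1 = P * !![u₁,0,0; 0,u₂,0; 0,0,u₃] * Q := by
      rw [hsub T, hu₁, hu₂, hu₃]
    rw [hfold, Matrix.inv_eq_right_inv hkey]
    have hentry : (P * !![u₁⁻¹,0,0; 0,u₂⁻¹,0; 0,0,u₃⁻¹] * Q) 2 0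
        = q * u₁⁻¹ - r * u₂⁻¹ * p + (p*r - q) * u₃⁻¹ := by
      subst hPdef hQdef
      simp [Matrix.mul_apply, Fin.sum_univ_three, Matrix.vecHead, Matrix.vecTail]
      ring
    rw [hentry, hp, hr, hq, hu₁, hu₂, hu₃]
    unfold igoS
    generalize (Real.exp (T*a₁) - 1)⁻¹ = w₁
    generalize (Real.exp (T*a₂) - 1)⁻¹ = w₂
    generalize (Real.exp (T*a₃) - 1)⁻¹ = w₃
    field_simp
    ring
  obtain ⟨x, y, z, hx, hxy, hyz, hS⟩ := igoS_sort ha₁ ha₂ ha₃ h12 h13 h23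
  refine ⟨hunit, ?_, ?_⟩
  · intro T hT
    rw [hinv T hT, hS T]
    exact mul_pos (mul_pos hg₁ hg₂) (igoS_pos hx hxy hyz hT)
  · intro T₁ hT₁ T₂ hT₂ hlt
    have h1 : (0:ℝ) < T₁ := hT₁
    simp only []
    rw [hinv T₁ h1, hinv T₂ (h1.trans hlt), hS T₁, hS T₂]
    exact mul_lt_mul_of_pos_left (igoS_anti hx hxy hyz h1 hlt) (mul_pos hg₁ hg₂)
end

section
/- Let a₁, a₂, a₃ be pairwise distinct positive reals, g₁, g₂ > 0, A = [[−a₁,0,0],[g₁,−a₂,0],[0,g₂,−a₃]], B = (1,0,0)ᵀ, and C = (0,0,1). Then for every T > 0, C · (exp(−T·A) − I)⁻¹ · B = g₁ g₂ Σ_{i=1}^{3} α_i / (e^{a_i T} − 1), where α_i = Π_{j≠i} 1/(a_j − a_i). -/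
open Matrix

set_option maxHeartbeats 1000000 in
/-- For the IGO system matrix `A = [[−a₁,0,0],[g₁,−a₂,0],[0,g₂,−a₃]]` with
pairwise distinct positive `a₁,a₂,a₃` and `g₁,g₂ > 0`, and every `T > 0`, the (3,1) entry
of `(exp(−T·A) − I)⁻¹` equals `g₁ g₂ Σᵢ αᵢ/(e^{aᵢT} − 1)` with
`αᵢ = Π_{j≠i} 1/(aⱼ − aᵢ)`. -/
theorem igo_transfer_partial_fractions (a₁ a₂ a₃ g₁ g₂ : ℝ)
    (ha₁ : 0 < a₁) (ha₂ : 0 < a₂) (ha₃ : 0 < a₃)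
    (h12 : a₁ ≠ a₂) (h13 : a₁ ≠ a₃) (h23 : a₂ ≠ a₃)
    (hg₁ : 0 < g₁) (hg₂ : 0 < g₂)
    (A : Matrix (Fin 3) (Fin 3) ℝ)
    (hA : A = !![-a₁, 0, 0; g₁, -a₂, 0; 0, g₂, -a₃])
    (a : Fin 3 → ℝ) (ha : a = ![a₁, a₂, a₃])
    (T : ℝ) (hT : 0 < T) :
    (NormedSpace.exp ((-T) • A) - 1)⁻¹ 2 0 =
      g₁ * g₂ * ∑ i : Fin 3,
        (∏ j ∈ Finset.univ.erase i, (1 / (a j - a i))) / (Real.exp (a i * T) - 1) := by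
  subst hA ha
  have h21 : a₂ - a₁ ≠ 0 := sub_ne_zero.mpr (Ne.symm h12)
  have h31 : a₃ - a₁ ≠ 0 := sub_ne_zero.mpr (Ne.symm h13)
  have h32 : a₃ - a₂ ≠ 0 := sub_ne_zero.mpr (Ne.symm h23)
  set P : Matrix (Fin 3) (Fin 3) ℝ :=
    !![1, 0, 0; g₁ / (a₂ - a₁), 1, 0;
       g₁ * g₂ / ((a₂ - a₁) * (a₃ - a₁)), g₂ / (a₃ - a₂), 1] with hP
  set Q : Matrix (Fin 3) (Fin 3) ℝ :=
    !![1, 0, 0; -(g₁ / (a₂ - a₁)), 1, 0;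
       g₁ / (a₂ - a₁) * (g₂ / (a₃ - a₂)) - g₁ * g₂ / ((a₂ - a₁) * (a₃ - a₁)),
       -(g₂ / (a₃ - a₂)), 1] with hQ
  have hPQ : P * Q = 1 := by
    ext i j
    fin_cases i <;> fin_cases j <;>
      simp [hP, hQ, Matrix.mul_apply, Fin.sum_univ_three, Matrix.one_apply] <;> ring
  have hQP : Q * P = 1 := by
    ext i j
    fin_cases i <;> fin_cases j <;>
      simp [hP, hQ, Matrix.mul_apply, Fin.sum_univ_three, Matrix.one_apply] <;> ring
  have hPinv : P⁻¹ = Q := Matrix.inv_eq_right_inv hPQ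
  have hPu : IsUnit P :=
    Matrix.isUnit_iff_isUnit_det P |>.mpr (Matrix.isUnit_det_of_right_inverse hPQ)
  have hDmat : (Matrix.diagonal ![a₁ * T, a₂ * T, a₃ * T] : Matrix (Fin 3) (Fin 3) ℝ) =
      !![a₁ * T, 0, 0; 0, a₂ * T, 0; 0, 0, a₃ * T] := by
    ext i j
    fin_cases i <;> fin_cases j <;>
      simp [Matrix.diagonal_apply, Matrix.vecHead, Matrix.vecTail]
  have hdecomp : (-T) • ((!![-a₁, 0, 0; g₁, -a₂, 0; 0, g₂, -a₃]) :
      Matrix (Fin 3) (Fin 3) ℝ) =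
      P * Matrix.diagonal ![a₁ * T, a₂ * T, a₃ * T] * Q := by
    rw [hDmat]
    ext i j
    fin_cases i <;> fin_cases j
    all_goals try simp [hP, hQ, Matrix.mul_apply, Fin.sum_univ_three, Matrix.smul_apply,
      Matrix.vecHead, Matrix.vecTail]
    all_goals try field_simp
    all_goals try ring
  rw [hdecomp, ← hPinv, Matrix.exp_conj P _ hPu, hPinv, Matrix.exp_diagonal]
  have hE1 : 1 < Real.exp (a₁ * T) := Real.one_lt_exp_iff.2 (by positivity)
  have hE2 : 1 < Real.exp (a₂ * T) := Real.one_lt_exp_iff.2 (by positivity)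
  have hE3 : 1 < Real.exp (a₃ * T) := Real.one_lt_exp_iff.2 (by positivity)
  set ev : Fin 3 → ℝ := ![Real.exp (a₁ * T), Real.exp (a₂ * T), Real.exp (a₃ * T)] with hev
  have hexp : NormedSpace.exp (![a₁ * T, a₂ * T, a₃ * T] : Fin 3 → ℝ) = ev := by
    funext i
    rw [Pi.exp_def]
    fin_cases i <;> simp [hev, ← Real.exp_eq_exp_ℝ]
  rw [hexp]
  have hne : ∀ i, ev i - 1 ≠ 0 := by
    intro i
    fin_cases i <;> simp [hev] <;> [skip; skip; skip] <;> intro h <;> nlinarith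
  have hsub : P * Matrix.diagonal ev * Q - 1 =
      P * Matrix.diagonal (fun i => ev i - 1) * Q := by
    have h1 : (1 : Matrix (Fin 3) (Fin 3) ℝ) = P * 1 * Q := by rw [Matrix.mul_one, hPQ]
    nth_rewrite 1 [h1]
    rw [← Matrix.sub_mul, ← Matrix.mul_sub]
    congr 2
    rw [← Matrix.diagonal_one, Matrix.diagonal_sub]
  rw [hsub]
  have hinv : (P * Matrix.diagonal (fun i => ev i - 1) * Q)⁻¹ =
      P * Matrix.diagonal (fun i => (ev i - 1)⁻¹) * Q := by
    apply Matrix.inv_eq_right_inv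
    calc P * Matrix.diagonal (fun i => ev i - 1) * Q *
          (P * Matrix.diagonal (fun i => (ev i - 1)⁻¹) * Q)
        = P * (Matrix.diagonal (fun i => ev i - 1) * (Q * P) *
            Matrix.diagonal (fun i => (ev i - 1)⁻¹)) * Q := by
          simp only [Matrix.mul_assoc]
      _ = P * (Matrix.diagonal (fun i => ev i - 1) *
            Matrix.diagonal (fun i => (ev i - 1)⁻¹)) * Q := by rw [hQP, Matrix.mul_one]
      _ = P * 1 * Q := by
          have hfun : (fun i => (ev i - 1) * (ev i - 1)⁻¹) = fun _ => (1 : ℝ) :=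
            funext fun i => mul_inv_cancel₀ (hne i)
          rw [Matrix.diagonal_mul_diagonal, hfun, Matrix.diagonal_one]
      _ = 1 := by rw [Matrix.mul_one, hPQ]
  rw [hinv]
  have e0 : (Finset.univ.erase (0 : Fin 3)) = {1, 2} := by decide
  have e1 : (Finset.univ.erase (1 : Fin 3)) = {0, 2} := by decide
  have e2 : (Finset.univ.erase (2 : Fin 3)) = {0, 1} := by decide
  rw [Fin.sum_univ_three, e0, e1, e2]
  rw [Finset.prod_insert (by decide), Finset.prod_singleton,
      Finset.prod_insert (by decide), Finset.prod_singleton,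
      Finset.prod_insert (by decide), Finset.prod_singleton]
  have hd : (Matrix.diagonal (fun i => (ev i - 1)⁻¹) : Matrix (Fin 3) (Fin 3) ℝ) =
      !![(Real.exp (a₁ * T) - 1)⁻¹, 0, 0; 0, (Real.exp (a₂ * T) - 1)⁻¹, 0;
         0, 0, (Real.exp (a₃ * T) - 1)⁻¹] := by
    ext i j
    fin_cases i <;> fin_cases j <;>
      simp [Matrix.diagonal_apply, hev, Matrix.vecHead, Matrix.vecTail]
  rw [hd]
  have hne1 : Real.exp (a₁ * T) - 1 ≠ 0 := by nlinarith
  have hne2 : Real.exp (a₂ * T) - 1 ≠ 0 := by nlinarith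
  have hne3 : Real.exp (a₃ * T) - 1 ≠ 0 := by nlinarith
  simp [hP, hQ, Matrix.mul_apply, Fin.sum_univ_three, Matrix.vecHead, Matrix.vecTail]
  have h12' : a₁ - a₂ ≠ 0 := sub_ne_zero.mpr h12
  have h13' : a₁ - a₃ ≠ 0 := sub_ne_zero.mpr h13
  have h23' : a₂ - a₃ ≠ 0 := sub_ne_zero.mpr h23
  generalize hE1' : Real.exp (a₁ * T) = E₁ at hne1 ⊢
  generalize hE2' : Real.exp (a₂ * T) = E₂ at hne2 ⊢
  generalize hE3' : Real.exp (a₃ * T) = E₃ at hne3 ⊢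
  have hc₁ : g₁ * g₂ / ((a₂ - a₁) * (a₃ - a₁)) = g₁ * g₂ * ((a₂ - a₁)⁻¹ * (a₃ - a₁)⁻¹) := by
    field_simp
  have hc₂ : -(g₂ / (a₃ - a₂) * (g₁ / (a₂ - a₁))) =
      g₁ * g₂ * ((a₁ - a₂)⁻¹ * (a₃ - a₂)⁻¹) := by
    field_simp
    ring
  have hc₃ : g₁ / (a₂ - a₁) * (g₂ / (a₃ - a₂)) - g₁ * g₂ / ((a₂ - a₁) * (a₃ - a₁)) =
      g₁ * g₂ * ((a₁ - a₃)⁻¹ * (a₂ - a₃)⁻¹) := by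
    field_simp
    ring
  rw [div_eq_mul_inv, div_eq_mul_inv, div_eq_mul_inv]
  linear_combination (E₁ - 1)⁻¹ * hc₁ + (E₂ - 1)⁻¹ * hc₂ + (E₃ - 1)⁻¹ * hc₃
end

section
/- Let a₁, a₂, a₃ be pairwise distinct positive reals, g₁, g₂ > 0, A = [[−a₁,0,0],[g₁,−a₂,0],[0,g₂,−a₃]], B = (1,0,0)ᵀ. Given T > 0 and λ > 0, the vector X := λ · (exp(−T·A) − I)⁻¹ · B has components x₁ = λ e^{−a₁T}/(1 − e^{−a₁T}), x₂ = λ g₁ T · e[−a₁T, −a₂T] / ((1 − e^{−a₁T})(1 − e^{−a₂T})), and x₃ = λ g₁ g₂ T² · ( e[−a₁T, −a₂T, −a₃T] + e[−(a₁+a₂)T, −(a₁+a₃)T, −(a₂+a₃)T] ) / ((1 − e^{−a₁T})(1 − e^{−a₂T})(1 − e^{−a₃T})), where e[·,·] and e[·,·,·] denote divided differences of the scalar exponential function; in particular all components of X are strictly positive. -/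
open Matrix

lemma dd1_exp_pos_of_lt {x y : ℝ} (h : x < y) : 0 < dd1 Real.exp x y :=
  div_pos (sub_pos.2 (Real.exp_lt_exp.2 h)) (sub_pos.2 h)

lemma dd1_symm (f : ℝ → ℝ) (x y : ℝ) : dd1 f x y = dd1 f y x := by
  unfold dd1
  rw [← neg_div_neg_eq, neg_sub, neg_sub]

lemma dd1_exp_pos {x y : ℝ} (h : x ≠ y) : 0 < dd1 Real.exp x y := by
  rcases h.lt_or_gt with h | h
  · exact dd1_exp_pos_of_lt h
  · rw [dd1_symm]; exact dd1_exp_pos_of_lt h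

lemma dd2_eq (f : ℝ → ℝ) {x y z : ℝ} (hxy : x ≠ y) (hxz : x ≠ z) (hyz : y ≠ z) :
    dd2 f x y z = f x / ((x - y) * (x - z)) + f y / ((y - x) * (y - z))
      + f z / ((z - x) * (z - y)) := by
  have h1 : y - x ≠ 0 := sub_ne_zero.2 hxy.symm
  have h2 : z - x ≠ 0 := sub_ne_zero.2 hxz.symm
  have h3 : z - y ≠ 0 := sub_ne_zero.2 hyz.symm
  have h4 : x - y ≠ 0 := sub_ne_zero.2 hxy
  have h5 : x - z ≠ 0 := sub_ne_zero.2 hxz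
  have h6 : y - z ≠ 0 := sub_ne_zero.2 hyz
  unfold dd2 dd1
  field_simp
  ring

lemma dd2_exp_pos_sorted {x y z : ℝ} (hxy : x < y) (hyz : y < z) :
    0 < dd2 Real.exp x y z := by
  have := strictConvexOn_exp.slope_strict_mono_adjacent (Set.mem_univ x) (Set.mem_univ z) hxy hyz
  unfold dd2 dd1
  apply div_pos _ (by linarith)
  simp only [Real.exp] at this ⊢
  linarith [this]

lemma dd2_exp_pos {x y z : ℝ} (hxy : x ≠ y) (hxz : x ≠ z) (hyz : y ≠ z) :
    0 < dd2 Real.exp x y z := by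
  have key : ∀ a b c : ℝ, a ≠ b → a ≠ c → b ≠ c →
      dd2 Real.exp x y z = dd2 Real.exp a b c →
      a < b → b < c → 0 < dd2 Real.exp x y z := by
    intro a b c _ _ _ he h1 h2; rw [he]; exact dd2_exp_pos_sorted h1 h2
  rcases hxy.lt_or_gt with h1 | h1 <;> rcases hxz.lt_or_gt with h2 | h2 <;>
    rcases hyz.lt_or_gt with h3 | h3
  · exact dd2_exp_pos_sorted h1 h3
  · exact key x z y hxz hxy hyz.symm
      (by rw [dd2_eq _ hxy hxz hyz, dd2_eq _ hxz hxy hyz.symm]; ring) h2 h3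
  · linarith
  · exact key z x y hxz.symm hyz.symm hxy
      (by rw [dd2_eq _ hxy hxz hyz, dd2_eq _ hxz.symm hyz.symm hxy]; ring) h2 h1
  · exact key y x z hxy.symm hyz hxz
      (by rw [dd2_eq _ hxy hxz hyz, dd2_eq _ hxy.symm hyz hxz]; ring) h1 h2
  · linarith
  · exact key y z x hyz hxy.symm hxz.symm
      (by rw [dd2_eq _ hxy hxz hyz, dd2_eq _ hyz hxy.symm hxz.symm]; ring) h3 h2
  · exact key z y x hyz.symm hxz.symm hxy.symm
      (by rw [dd2_eq _ hxy hxz hyz, dd2_eq _ hyz.symm hxz.symm hxy.symm]; ring) h3 h1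

set_option maxHeartbeats 3000000 in
/-- Closed-form expressions for the fixed point of the impulse-to-impulse map
of the IGO: with `A = [[−a₁,0,0],[g₁,−a₂,0],[0,g₂,−a₃]]` (pairwise distinct positive
`a₁,a₂,a₃`, `g₁,g₂ > 0`), `B = (1,0,0)ᵀ`, `T > 0` and `λ > 0`, the vector
`X := λ·(exp(−T·A) − I)⁻¹·B` has the components given via divided differences of the
scalar exponential, and all its components are strictly positive. -/
theorem igo_fixed_point_formulas (a₁ a₂ a₃ g₁ g₂ : ℝ)
    (ha₁ : 0 < a₁) (ha₂ : 0 < a₂) (ha₃ : 0 < a₃)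
    (h12 : a₁ ≠ a₂) (h13 : a₁ ≠ a₃) (h23 : a₂ ≠ a₃)
    (hg₁ : 0 < g₁) (hg₂ : 0 < g₂)
    (A : Matrix (Fin 3) (Fin 3) ℝ)
    (hA : A = !![-a₁, 0, 0; g₁, -a₂, 0; 0, g₂, -a₃])
    (B : Fin 3 → ℝ) (hB : B = ![1, 0, 0])
    (T lam : ℝ) (hT : 0 < T) (hlam : 0 < lam)
    (X : Fin 3 → ℝ)
    (hX : X = lam • ((NormedSpace.exp ((-T) • A) - 1)⁻¹).mulVec B) :
    X 0 = lam * Real.exp (-a₁ * T) / (1 - Real.exp (-a₁ * T)) ∧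
    X 1 = lam * g₁ * T * dd1 Real.exp (-a₁ * T) (-a₂ * T) /
        ((1 - Real.exp (-a₁ * T)) * (1 - Real.exp (-a₂ * T))) ∧
    X 2 = lam * g₁ * g₂ * T ^ 2 *
        (dd2 Real.exp (-a₁ * T) (-a₂ * T) (-a₃ * T) +
          dd2 Real.exp (-(a₁ + a₂) * T) (-(a₁ + a₃) * T) (-(a₂ + a₃) * T)) /
        ((1 - Real.exp (-a₁ * T)) * (1 - Real.exp (-a₂ * T)) * (1 - Real.exp (-a₃ * T))) ∧
    (∀ i, 0 < X i) := by
  subst hA hB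
  have hT' : T ≠ 0 := hT.ne'
  have d21 : a₂ - a₁ ≠ 0 := sub_ne_zero.2 h12.symm
  have d31 : a₃ - a₁ ≠ 0 := sub_ne_zero.2 h13.symm
  have d32 : a₃ - a₂ ≠ 0 := sub_ne_zero.2 h23.symm
  obtain ⟨c1, hc1⟩ : ∃ c : ℝ, c * (a₂ - a₁) = g₁ := ⟨g₁ / (a₂-a₁), div_mul_cancel₀ _ d21⟩
  obtain ⟨c3, hc3⟩ : ∃ c : ℝ, c * (a₃ - a₂) = g₂ := ⟨g₂ / (a₃-a₂), div_mul_cancel₀ _ d32⟩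
  obtain ⟨c2, hc2⟩ : ∃ c : ℝ, c * (a₃ - a₁) = c1 * g₂ :=
    ⟨c1 * g₂ / (a₃-a₁), div_mul_cancel₀ _ d31⟩
  set S : Matrix (Fin 3) (Fin 3) ℝ := !![1,0,0; c1,1,0; c2,c3,1] with hS
  set Si : Matrix (Fin 3) (Fin 3) ℝ := !![1,0,0; -c1,1,0; c1*c3-c2,-c3,1] with hSi
  have hSSi : S * Si = 1 := by
    ext i j
    fin_cases i <;> fin_cases j <;>
      simp [hS, hSi, Matrix.mul_apply, Fin.sum_univ_three, Matrix.one_apply] <;> ring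
  have hSiS : Si * S = 1 := by
    ext i j
    fin_cases i <;> fin_cases j <;>
      simp [hS, hSi, Matrix.mul_apply, Fin.sum_univ_three, Matrix.one_apply] <;> ring
  set D : Matrix (Fin 3) (Fin 3) ℝ := Matrix.diagonal ![a₁*T, a₂*T, a₃*T] with hD
  have hDD : D = !![a₁*T,0,0; 0,a₂*T,0; 0,0,a₃*T] := by
    rw [hD]
    ext i j
    fin_cases i <;> fin_cases j <;> simp [Matrix.diagonal_apply, Matrix.vecHead, Matrix.vecTail]
  have hM : (-T) • !![-a₁, 0, 0; g₁, -a₂, 0; 0, g₂, -a₃] = S * D * Si := by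
    rw [hDD]
    ext i j
    fin_cases i <;> fin_cases j <;>
      simp [hS, hSi, Matrix.mul_apply, Fin.sum_univ_three] <;>
      first
        | ring1
        | linear_combination T * hc1
        | linear_combination (-T) * hc1
        | linear_combination T * hc3
        | linear_combination (-T) * hc3
        | linear_combination T * hc2 - T * c1 * hc3
        | linear_combination (-T) * hc2 + T * c1 * hc3
  set U : (Matrix (Fin 3) (Fin 3) ℝ)ˣ := ⟨S, Si, hSSi, hSiS⟩ with hU
  have hconj : NormedSpace.exp ((-T) • !![-a₁, 0, 0; g₁, -a₂, 0; 0, g₂, -a₃])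
      = S * NormedSpace.exp D * Si := by
    rw [hM]
    exact Matrix.exp_units_conj U D
  set e1 := Real.exp (a₁ * T) with he1
  set e2 := Real.exp (a₂ * T) with he2
  set e3 := Real.exp (a₃ * T) with he3
  have hED : NormedSpace.exp D = !![e1,0,0; 0,e2,0; 0,0,e3] := by
    rw [hD, Matrix.exp_diagonal]
    ext i j
    fin_cases i <;> fin_cases j <;>
      simp [Matrix.diagonal_apply, Matrix.vecHead, Matrix.vecTail, Pi.exp_def, ← Real.exp_eq_exp_ℝ, he1, he2, he3]
  set N : Matrix (Fin 3) (Fin 3) ℝ :=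
    !![e1 - 1, 0, 0;
       c1*(e1-e2), e2 - 1, 0;
       c2*e1 - c1*c3*e2 + (c1*c3-c2)*e3, c3*(e2-e3), e3 - 1] with hN
  have hE : NormedSpace.exp ((-T) • !![-a₁, 0, 0; g₁, -a₂, 0; 0, g₂, -a₃]) - 1 = N := by
    rw [hconj, hED, hN]
    ext i j
    fin_cases i <;> fin_cases j <;>
      simp [hS, hSi, Matrix.mul_apply, Fin.sum_univ_three, Matrix.one_apply] <;> ring
  have he1' : 1 < e1 := by rw [he1, ← Real.exp_zero]; exact Real.exp_lt_exp.2 (by positivity)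
  have he2' : 1 < e2 := by rw [he2, ← Real.exp_zero]; exact Real.exp_lt_exp.2 (by positivity)
  have he3' : 1 < e3 := by rw [he3, ← Real.exp_zero]; exact Real.exp_lt_exp.2 (by positivity)
  have ne1 : e1 - 1 ≠ 0 := by linarith
  have ne2 : e2 - 1 ≠ 0 := by linarith
  have ne3 : e3 - 1 ≠ 0 := by linarith
  have hdet : N.det = (e1 - 1) * ((e2 - 1) * (e3 - 1)) := by
    rw [hN, Matrix.det_fin_three]
    simp
    ring
  have hdu : IsUnit N.det := by
    rw [hdet]
    exact (mul_ne_zero ne1 (mul_ne_zero ne2 ne3)).isUnit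
  have hNX : N.mulVec X = lam • ![1, 0, 0] := by
    rw [hX, hE, Matrix.mulVec_smul, Matrix.mulVec_mulVec, Matrix.mul_nonsing_inv _ hdu,
      Matrix.one_mulVec]
  have h0 := congrFun hNX 0
  have h1 := congrFun hNX 1
  have h2 := congrFun hNX 2
  simp [hN, Matrix.mulVec, dotProduct, Fin.sum_univ_three] at h0 h1 h2
  -- explicit values of c's
  have hc1' : c1 = g₁ / (a₂ - a₁) := (eq_div_iff d21).2 hc1
  have hc3' : c3 = g₂ / (a₃ - a₂) := (eq_div_iff d32).2 hc3
  have hc2' : c2 = c1 * g₂ / (a₃ - a₁) := (eq_div_iff d31).2 hc2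
  have he1z : e1 ≠ 0 := by rw [he1]; exact (Real.exp_pos _).ne'
  have he2z : e2 ≠ 0 := by rw [he2]; exact (Real.exp_pos _).ne'
  have he3z : e3 ≠ 0 := by rw [he3]; exact (Real.exp_pos _).ne'
  have d12 : a₁ - a₂ ≠ 0 := sub_ne_zero.2 h12
  have d13 : a₁ - a₃ ≠ 0 := sub_ne_zero.2 h13
  have d23 : a₂ - a₃ ≠ 0 := sub_ne_zero.2 h23
  have hexp1 : Real.exp (-a₁ * T) = e1⁻¹ := by
    rw [show -a₁*T = -(a₁*T) by ring, Real.exp_neg, he1]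
  have hexp2 : Real.exp (-a₂ * T) = e2⁻¹ := by
    rw [show -a₂*T = -(a₂*T) by ring, Real.exp_neg, he2]
  have hexp3 : Real.exp (-a₃ * T) = e3⁻¹ := by
    rw [show -a₃*T = -(a₃*T) by ring, Real.exp_neg, he3]
  have hX0 : X 0 = lam / (e1 - 1) := by
    rw [eq_div_iff ne1]; linear_combination h0
  have hX1 : X 1 = lam * c1 * (e2 - e1) / ((e1 - 1) * (e2 - 1)) := by
    rw [eq_div_iff (mul_ne_zero ne1 ne2)]
    linear_combination (e1 - 1) * h1 - c1 * (e1 - e2) * h0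
  have hX2 : X 2 = -(lam * ((c2*e1 - c1*c3*e2 + (c1*c3-c2)*e3) * (e2 - 1)
      + c1*c3*(e2-e3)*(e2-e1))) / ((e1 - 1) * ((e2 - 1) * (e3 - 1))) := by
    rw [eq_div_iff (mul_ne_zero ne1 (mul_ne_zero ne2 ne3))]
    linear_combination (e1-1)*(e2-1)*h2 - (c2*e1 - c1*c3*e2 + (c1*c3-c2)*e3)*(e2-1)*h0
      - c3*(e2-e3)*(e1-1)*h1 + c1*c3*(e2-e3)*(e1-e2)*h0
  have hexp12 : Real.exp (-(a₁+a₂) * T) = (e1*e2)⁻¹ := by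
    rw [show -(a₁+a₂)*T = -(a₁*T + a₂*T) by ring, Real.exp_neg, Real.exp_add, he1, he2]
  have hexp13 : Real.exp (-(a₁+a₃) * T) = (e1*e3)⁻¹ := by
    rw [show -(a₁+a₃)*T = -(a₁*T + a₃*T) by ring, Real.exp_neg, Real.exp_add, he1, he3]
  have hexp23 : Real.exp (-(a₂+a₃) * T) = (e2*e3)⁻¹ := by
    rw [show -(a₂+a₃)*T = -(a₂*T + a₃*T) by ring, Real.exp_neg, Real.exp_add, he2, he3]
  have hdd1v : dd1 Real.exp (-a₁ * T) (-a₂ * T) = (e2⁻¹ - e1⁻¹) / ((a₁ - a₂)*T) := by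
    unfold dd1
    rw [hexp1, hexp2, show -a₂*T - -a₁*T = (a₁-a₂)*T by ring]
  have hdd2a : dd2 Real.exp (-a₁ * T) (-a₂ * T) (-a₃ * T) =
      ((e3⁻¹ - e2⁻¹)/((a₂-a₃)*T) - (e2⁻¹ - e1⁻¹)/((a₁-a₂)*T)) / ((a₁-a₃)*T) := by
    unfold dd2 dd1
    rw [hexp1, hexp2, hexp3, show -a₃*T - -a₂*T = (a₂-a₃)*T by ring,
      show -a₂*T - -a₁*T = (a₁-a₂)*T by ring, show -a₃*T - -a₁*T = (a₁-a₃)*T by ring]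
  have hdd2b : dd2 Real.exp (-(a₁+a₂) * T) (-(a₁+a₃) * T) (-(a₂+a₃) * T) =
      (((e2*e3)⁻¹ - (e1*e3)⁻¹)/((a₁-a₂)*T) - ((e1*e3)⁻¹ - (e1*e2)⁻¹)/((a₂-a₃)*T))
        / ((a₁-a₃)*T) := by
    unfold dd2 dd1
    rw [hexp12, hexp13, hexp23, show -(a₂+a₃)*T - -(a₁+a₃)*T = (a₁-a₂)*T by ring,
      show -(a₁+a₃)*T - -(a₁+a₂)*T = (a₂-a₃)*T by ring,
      show -(a₂+a₃)*T - -(a₁+a₂)*T = (a₁-a₃)*T by ring]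
  have F0 : X 0 = lam * Real.exp (-a₁ * T) / (1 - Real.exp (-a₁ * T)) := by
    rw [hX0, hexp1]
    rw [div_eq_div_iff ne1 (by
      have : e1⁻¹ < 1 := inv_lt_one_of_one_lt₀ he1'
      intro h; rw [sub_eq_zero] at h; exact absurd h.symm this.ne)]
    field_simp
  have F1 : X 1 = lam * g₁ * T * dd1 Real.exp (-a₁ * T) (-a₂ * T) /
      ((1 - Real.exp (-a₁ * T)) * (1 - Real.exp (-a₂ * T))) := by
    rw [hX1, hdd1v, hexp1, hexp2, hc1']
    field_simp
    ring
  have hdd2a' : dd2 Real.exp (-a₁ * T) (-a₂ * T) (-a₃ * T) =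
      ((e2-e3)*e1*(a₁-a₂) - (e1-e2)*e3*(a₂-a₃)) /
        ((e1*(e2*e3)) * ((a₁-a₂)*((a₂-a₃)*(a₁-a₃))*T^2)) := by
    rw [hdd2a]
    field_simp
  have hdd2b' : dd2 Real.exp (-(a₁+a₂) * T) (-(a₁+a₃) * T) (-(a₂+a₃) * T) =
      ((e1-e2)*(a₂-a₃) - (e2-e3)*(a₁-a₂)) /
        ((e1*(e2*e3)) * ((a₁-a₂)*((a₂-a₃)*(a₁-a₃))*T^2)) := by
    rw [hdd2b]
    field_simp
  have hE3 : e1*(e2*e3) ≠ 0 := mul_ne_zero he1z (mul_ne_zero he2z he3z)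
  have hP : (a₁-a₂)*((a₂-a₃)*(a₁-a₃)) ≠ 0 := mul_ne_zero d12 (mul_ne_zero d23 d13)
  have hQne : (e1-1)*((e2-1)*(e3-1)) ≠ 0 := mul_ne_zero ne1 (mul_ne_zero ne2 ne3)
  have hQ : (1 - e1⁻¹) * (1 - e2⁻¹) * (1 - e3⁻¹) =
      (e1-1)*((e2-1)*(e3-1)) / (e1*(e2*e3)) := by
    field_simp
  have key : ∀ N Q E P : ℝ, E ≠ 0 → P ≠ 0 → Q ≠ 0 →
      lam*g₁*g₂*T^2*(N/(E*(P*T^2)))/(Q/E) = lam*g₁*g₂*N/(P*Q) := by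
    intro N Q E P hE hPn hQn
    field_simp
  have key2 : -(lam * ((c2*e1 - c1*c3*e2 + (c1*c3-c2)*e3) * (e2 - 1)
        + c1*c3*(e2-e3)*(e2-e1))) * ((a₁-a₂)*((a₂-a₃)*(a₁-a₃))) =
      lam*g₁*g₂*((e2-e3)*e1*(a₁-a₂) - (e1-e2)*e3*(a₂-a₃)
        + ((e1-e2)*(a₂-a₃) - (e2-e3)*(a₁-a₂))) := by
    rw [hc2', hc1', hc3']
    field_simp
    ring
  have F2 : X 2 = lam * g₁ * g₂ * T ^ 2 *
      (dd2 Real.exp (-a₁ * T) (-a₂ * T) (-a₃ * T) +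
        dd2 Real.exp (-(a₁ + a₂) * T) (-(a₁ + a₃) * T) (-(a₂ + a₃) * T)) /
      ((1 - Real.exp (-a₁ * T)) * (1 - Real.exp (-a₂ * T)) * (1 - Real.exp (-a₃ * T))) := by
    rw [hX2, hdd2a', hdd2b', hexp1, hexp2, hexp3, hQ, ← add_div,
      key _ _ _ _ hE3 hP hQne]
    rw [div_eq_div_iff hQne (mul_ne_zero hP hQne)]
    linear_combination ((e1-1)*((e2-1)*(e3-1))) * key2
  have h1m : 0 < 1 - Real.exp (-a₁ * T) := by
    rw [hexp1]; have := inv_lt_one_of_one_lt₀ he1'; linarith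
  have h2m : 0 < 1 - Real.exp (-a₂ * T) := by
    rw [hexp2]; have := inv_lt_one_of_one_lt₀ he2'; linarith
  have h3m : 0 < 1 - Real.exp (-a₃ * T) := by
    rw [hexp3]; have := inv_lt_one_of_one_lt₀ he3'; linarith
  have hne12 : (-a₁ * T : ℝ) ≠ -a₂ * T := fun h =>
    h12 (by have := mul_right_cancel₀ hT' (show a₁ * T = a₂ * T by linarith); exact this)
  have hne13 : (-a₁ * T : ℝ) ≠ -a₃ * T := fun h =>
    h13 (by have := mul_right_cancel₀ hT' (show a₁ * T = a₃ * T by linarith); exact this)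
  have hne23 : (-a₂ * T : ℝ) ≠ -a₃ * T := fun h =>
    h23 (by have := mul_right_cancel₀ hT' (show a₂ * T = a₃ * T by linarith); exact this)
  have hs12 : (-(a₁+a₂) * T : ℝ) ≠ -(a₁+a₃) * T := fun h =>
    h23 (by have := mul_right_cancel₀ hT' (show (a₁+a₂) * T = (a₁+a₃) * T by linarith); linarith)
  have hs13 : (-(a₁+a₂) * T : ℝ) ≠ -(a₂+a₃) * T := fun h =>
    h13 (by have := mul_right_cancel₀ hT' (show (a₁+a₂) * T = (a₂+a₃) * T by linarith); linarith)
  have hs23 : (-(a₁+a₃) * T : ℝ) ≠ -(a₂+a₃) * T := fun h =>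
    h12 (by have := mul_right_cancel₀ hT' (show (a₁+a₃) * T = (a₂+a₃) * T by linarith); linarith)
  have p0 : 0 < X 0 := by
    rw [F0]; exact div_pos (mul_pos hlam (Real.exp_pos _)) h1m
  have p1 : 0 < X 1 := by
    rw [F1]
    exact div_pos (mul_pos (mul_pos (mul_pos hlam hg₁) hT) (dd1_exp_pos hne12))
      (mul_pos h1m h2m)
  have p2 : 0 < X 2 := by
    rw [F2]
    exact div_pos (mul_pos (by positivity)
        (add_pos (dd2_exp_pos hne12 hne13 hne23) (dd2_exp_pos hs12 hs13 hs23)))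
      (mul_pos (mul_pos h1m h2m) h3m)
  exact ⟨F0, F1, F2, fun i => by fin_cases i <;> assumption⟩
end

section
/- Let a₁, a₂, a₃ be pairwise distinct positive reals, g₁, g₂ > 0, A = [[−a₁,0,0],[g₁,−a₂,0],[0,g₂,−a₃]], B = (1,0,0)ᵀ, T > 0 and λ ∈ ℝ. Then a vector X ∈ ℝ³ satisfies X = exp(T·A)(X + λ·B) if and only if X = λ · (exp(−T·A) − I)⁻¹ · B (the matrix exp(−T·A) − I being invertible for T > 0). -/
open Matrix

/-- With `A = [[−a₁,0,0],[g₁,−a₂,0],[0,g₂,−a₃]]` (pairwise distinct positive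
`a₁,a₂,a₃`, `g₁,g₂ > 0`), `B = (1,0,0)ᵀ`, `T > 0` and `λ ∈ ℝ`, the matrix `exp(−T·A) − I`
is invertible, and a vector `X ∈ ℝ³` satisfies `X = exp(T·A)(X + λ·B)` if and only if
`X = λ·(exp(−T·A) − I)⁻¹·B`. -/
theorem igo_one_cycle_fixed_point_characterization (a₁ a₂ a₃ g₁ g₂ : ℝ)
    (ha₁ : 0 < a₁) (ha₂ : 0 < a₂) (ha₃ : 0 < a₃)
    (h12 : a₁ ≠ a₂) (h13 : a₁ ≠ a₃) (h23 : a₂ ≠ a₃)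
    (hg₁ : 0 < g₁) (hg₂ : 0 < g₂)
    (A : Matrix (Fin 3) (Fin 3) ℝ)
    (hA : A = !![-a₁, 0, 0; g₁, -a₂, 0; 0, g₂, -a₃])
    (B : Fin 3 → ℝ) (hB : B = ![1, 0, 0])
    (T lam : ℝ) (hT : 0 < T) :
    IsUnit (NormedSpace.exp ((-T) • A) - 1) ∧
    (∀ X : Fin 3 → ℝ,
      X = (NormedSpace.exp (T • A)).mulVec (X + lam • B) ↔
      X = lam • ((NormedSpace.exp ((-T) • A) - 1)⁻¹).mulVec B) := by
  have h21 : a₂ - a₁ ≠ 0 := sub_ne_zero.2 (Ne.symm h12)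
  have h31 : a₃ - a₁ ≠ 0 := sub_ne_zero.2 (Ne.symm h13)
  have h32 : a₃ - a₂ ≠ 0 := sub_ne_zero.2 (Ne.symm h23)
  set P : Matrix (Fin 3) (Fin 3) ℝ :=
    !![1, 0, 0; g₁/(a₂-a₁), 1, 0; g₁*g₂/((a₂-a₁)*(a₃-a₁)), g₂/(a₃-a₂), 1] with hP
  have hdetP : P.det = 1 := by simp [hP, Matrix.det_fin_three]
  have hPd : IsUnit P.det := by rw [hdetP]; exact isUnit_one
  have hPu : IsUnit P := (Matrix.isUnit_iff_isUnit_det _).2 hPd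
  have hPinvu : IsUnit P⁻¹ := Matrix.isUnit_nonsing_inv_iff.2 hPu
  set d : Fin 3 → ℝ := ![-a₁, -a₂, -a₃] with hd
  have hAP : A * P = P * Matrix.diagonal d := by
    subst hA
    ext i j
    fin_cases i <;> fin_cases j <;>
      simp [hP, hd, Matrix.mul_apply, Fin.sum_univ_three, Matrix.diagonal] <;>
      field_simp <;> ring
  have hAconj : A = P * Matrix.diagonal d * P⁻¹ := by
    have h := congrArg (· * P⁻¹) hAP
    simpa [Matrix.mul_assoc, Matrix.mul_nonsing_inv _ hPd] using h
  have hexp : ∀ t : ℝ, NormedSpace.exp (t • A)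
      = P * Matrix.diagonal (fun i => Real.exp (t * d i)) * P⁻¹ := by
    intro t
    have h1 : t • A = P * Matrix.diagonal (fun i => t * d i) * P⁻¹ := by
      rw [hAconj, ← smul_mul_assoc, ← mul_smul_comm]
      congr 1
      congr 1
      ext i j
      by_cases h : i = j <;> simp [Matrix.diagonal, h]
    rw [h1, Matrix.exp_conj P _ hPu, Matrix.exp_diagonal]
    congr 2
    ext i
    rw [Pi.exp_def, Real.exp_eq_exp_ℝ]
  have key : NormedSpace.exp ((-T) • A) - 1
      = P * Matrix.diagonal (fun i => Real.exp ((-T) * d i) - 1) * P⁻¹ := by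
    rw [hexp]
    have h1 : (1 : Matrix (Fin 3) (Fin 3) ℝ) = P * 1 * P⁻¹ := by
      rw [Matrix.mul_one, Matrix.mul_nonsing_inv _ hPd]
    conv_lhs => rw [h1]
    rw [← Matrix.sub_mul, ← Matrix.mul_sub]
    congr 2
    ext i j
    by_cases h : i = j <;> simp [Matrix.diagonal, Matrix.one_apply, h]
  have hTd : ∀ i : Fin 3, (-T) * d i ≠ 0 := by
    intro i
    fin_cases i <;> simp [hd]
    · exact ⟨hT.ne', ha₁.ne'⟩
    · exact ⟨hT.ne', ha₂.ne'⟩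
    · exact ⟨hT.ne', ha₃.ne'⟩
  have hdiagne : ∀ i : Fin 3, Real.exp ((-T) * d i) - 1 ≠ 0 := by
    intro i
    exact sub_ne_zero.2 fun h => hTd i ((Real.exp_eq_one_iff _).1 h)
  have hDu : IsUnit (Matrix.diagonal (fun i => Real.exp ((-T) * d i) - 1)) := by
    rw [Matrix.isUnit_iff_isUnit_det, Matrix.det_diagonal]
    exact isUnit_iff_ne_zero.2 (Finset.prod_ne_zero_iff.2 fun i _ => hdiagne i)
  have hU : IsUnit (NormedSpace.exp ((-T) • A) - 1) := by
    rw [key]; exact (hPu.mul hDu).mul hPinvu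
  have hUd : IsUnit (NormedSpace.exp ((-T) • A) - 1).det :=
    (Matrix.isUnit_iff_isUnit_det _).1 hU
  -- exp(T•A) and exp((-T)•A) are mutually inverse
  have hcomm : Commute (T • A) ((-T) • A) :=
    ((Commute.refl A).smul_left _).smul_right _
  have hmul1 : NormedSpace.exp (T • A) * NormedSpace.exp ((-T) • A) = 1 := by
    rw [← Matrix.exp_add_of_commute _ _ hcomm, ← add_smul]
    simp [NormedSpace.exp_zero]
  have hmul2 : NormedSpace.exp ((-T) • A) * NormedSpace.exp (T • A) = 1 := by
    rw [← Matrix.exp_add_of_commute _ _ hcomm.symm, ← add_smul]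
    simp [NormedSpace.exp_zero]
  refine ⟨hU, fun X => ?_⟩
  set E := NormedSpace.exp ((-T) • A) - 1 with hE
  constructor
  · intro h
    have h2 : (NormedSpace.exp ((-T) • A)).mulVec X = X + lam • B := by
      conv_lhs => rw [h]
      rw [Matrix.mulVec_mulVec, hmul2, Matrix.one_mulVec]
    have h3 : E.mulVec X = lam • B := by
      rw [hE, Matrix.sub_mulVec, h2, Matrix.one_mulVec]
      abel
    have h4 := congrArg (fun v => (E⁻¹).mulVec v) h3
    simpa [Matrix.mulVec_mulVec, Matrix.nonsing_inv_mul _ hUd, Matrix.one_mulVec,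
      Matrix.mulVec_smul] using h4
  · intro h
    have h3 : E.mulVec X = lam • B := by
      rw [h, Matrix.mulVec_smul, Matrix.mulVec_mulVec, Matrix.mul_nonsing_inv _ hUd,
        Matrix.one_mulVec]
    have h2 : (NormedSpace.exp ((-T) • A)).mulVec X = X + lam • B := by
      have := h3
      rw [hE, Matrix.sub_mulVec, Matrix.one_mulVec, sub_eq_iff_eq_add] at this
      rw [this]; abel
    have h5 := congrArg (fun v => (NormedSpace.exp (T • A)).mulVec v) h2
    simp only [Matrix.mulVec_mulVec] at h5
    rw [hmul1, Matrix.one_mulVec] at h5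
    exact h5
end

section
/- Let a₁, a₂, a₃ be pairwise distinct positive reals, g₁, g₂ > 0, A = [[−a₁,0,0],[g₁,−a₂,0],[0,g₂,−a₃]], B = (1,0,0)ᵀ. Then for every T > 0 the vector D := A · (exp(−T·A) − I)⁻¹ · B is entrywise strictly negative. -/
open Matrix Real Set


/-- ψ(x) = (x-2)e^{x/2} + (x+2)e^{-x/2} is positive for x > 0. -/
lemma aux_psi_pos {x : ℝ} (hx : 0 < x) :
    0 < (x - 2) * Real.exp (x / 2) + (x + 2) * Real.exp (-(x / 2)) := by
  have key : StrictMonoOn (fun y : ℝ => (y - 2) * Real.exp (y / 2) + (y + 2) * Real.exp (-(y / 2)))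
      (Ici (0:ℝ)) := by
    apply strictMonoOn_of_deriv_pos (convex_Ici 0)
    · fun_prop
    · intro y hy
      rw [interior_Ici] at hy
      have h1 : HasDerivAt (fun y : ℝ => (y - 2) * Real.exp (y / 2) + (y + 2) * Real.exp (-(y / 2)))
          ((1 : ℝ) * Real.exp (y / 2) + (y - 2) * (Real.exp (y / 2) * (1/2))
            + ((1 : ℝ) * Real.exp (-(y / 2)) + (y + 2) * (Real.exp (-(y / 2)) * (-(1/2))))) y := by
        have e1 : HasDerivAt (fun y : ℝ => Real.exp (y / 2)) (Real.exp (y / 2) * (1/2)) y := by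
          simpa [Function.comp_def] using (Real.hasDerivAt_exp (y/2)).comp y ((hasDerivAt_id y).div_const 2)
        have e2 : HasDerivAt (fun y : ℝ => Real.exp (-(y / 2))) (Real.exp (-(y / 2)) * (-(1/2))) y := by
          simpa [Function.comp_def, Pi.neg_def] using (Real.hasDerivAt_exp (-(y/2))).comp y (((hasDerivAt_id y).div_const 2).neg)
        exact (((hasDerivAt_id y).sub_const 2).mul e1).add (((hasDerivAt_id y).add_const 2).mul e2)
      rw [h1.deriv]
      have hy' : (0:ℝ) < y := hy
      have hlt : Real.exp (-(y/2)) < Real.exp (y/2) := Real.exp_lt_exp.2 (by linarith)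
      nlinarith [mul_pos hy' (sub_pos.2 hlt)]
  have := key (Set.mem_Ici.2 le_rfl) (Set.mem_Ici.2 hx.le) hx
  simpa using this

/-- Key inequality: x e^x + x - 2 e^x + 2 > 0 for x > 0. -/
lemma aux_key_ineq {x : ℝ} (hx : 0 < x) :
    0 < x * Real.exp x + x - 2 * Real.exp x + 2 := by
  have h := aux_psi_pos hx
  have h2 : Real.exp (x/2) * Real.exp (x/2) = Real.exp x := by
    rw [← Real.exp_add]; ring_nf
  have h3 : Real.exp (-(x/2)) * Real.exp (x/2) = 1 := by
    rw [← Real.exp_add]; simp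
  nlinarith [Real.exp_pos (x/2), mul_pos (Real.exp_pos (x/2)) h]

noncomputable def hfun (x : ℝ) : ℝ := x / (Real.exp x - 1)

noncomputable def hfun' (x : ℝ) : ℝ :=
  (Real.exp x - 1 - x * Real.exp x) / (Real.exp x - 1) ^ 2

lemma exp_sub_one_pos {x : ℝ} (hx : 0 < x) : 0 < Real.exp x - 1 :=
  sub_pos.2 (Real.one_lt_exp_iff.2 hx)

lemma hfun_hasDeriv {x : ℝ} (hx : 0 < x) : HasDerivAt hfun (hfun' x) x := by
  have hne : Real.exp x - 1 ≠ 0 := ne_of_gt (exp_sub_one_pos hx)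
  have hd : HasDerivAt (fun y : ℝ => Real.exp y - 1) (Real.exp x) x :=
    (Real.hasDerivAt_exp x).sub_const 1
  have := (hasDerivAt_id x).div hd hne
  exact this.congr_deriv (by unfold hfun'; simp only [id]; ring)

lemma hfun'_hasDeriv {x : ℝ} (hx : 0 < x) :
    HasDerivAt hfun'
      (Real.exp x * (x * Real.exp x + x - 2 * Real.exp x + 2) / (Real.exp x - 1) ^ 3) x := by
  have hpos : 0 < Real.exp x - 1 := exp_sub_one_pos hx
  have hne : Real.exp x - 1 ≠ 0 := ne_of_gt hpos
  have hdN : HasDerivAt (fun y : ℝ => Real.exp y - 1 - y * Real.exp y)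
      (Real.exp x - (1 * Real.exp x + x * Real.exp x)) x :=
    ((Real.hasDerivAt_exp x).sub_const 1).sub ((hasDerivAt_id x).mul (Real.hasDerivAt_exp x))
  have hdD : HasDerivAt (fun y : ℝ => (Real.exp y - 1) ^ 2)
      (2 * (Real.exp x - 1) ^ 1 * Real.exp x) x :=
    ((Real.hasDerivAt_exp x).sub_const 1).pow 2
  have hne2 : (Real.exp x - 1) ^ 2 ≠ 0 := pow_ne_zero 2 hne
  have := hdN.div hdD hne2
  exact this.congr_deriv (by field_simp; ring)

lemma hfun_deriv_on {x : ℝ} (hx : 0 < x) : deriv hfun x = hfun' x := (hfun_hasDeriv hx).deriv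

lemma hfun_strictConvex : StrictConvexOn ℝ (Ioi (0:ℝ)) hfun := by
  apply strictConvexOn_of_deriv2_pos (convex_Ioi 0)
  · apply ContinuousOn.div continuousOn_id
    · fun_prop
    · intro x hx; exact ne_of_gt (exp_sub_one_pos hx)
  · intro x hx
    rw [interior_Ioi] at hx
    have heq : deriv (deriv hfun) x = Real.exp x * (x * Real.exp x + x - 2 * Real.exp x + 2) / (Real.exp x - 1) ^ 3 := by
      have hev : deriv hfun =ᶠ[nhds x] hfun' := by
        filter_upwards [Ioi_mem_nhds hx] with y hy
        exact hfun_deriv_on hy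
      rw [Filter.EventuallyEq.deriv_eq hev]
      exact (hfun'_hasDeriv hx).deriv
    simp only [Function.iterate_succ, Function.iterate_zero, Function.comp_apply, Function.id_def]
    rw [heq]
    exact div_pos (mul_pos (Real.exp_pos x) (aux_key_ineq hx)) (pow_pos (exp_sub_one_pos hx) 3)

lemma hfun_strictAnti : StrictAntiOn hfun (Ioi (0:ℝ)) := by
  apply strictAntiOn_of_deriv_neg (convex_Ioi 0)
  · apply ContinuousOn.div continuousOn_id
    · fun_prop
    · intro x hx; exact ne_of_gt (exp_sub_one_pos hx)
  · intro x hx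
    rw [interior_Ioi] at hx
    rw [hfun_deriv_on hx]
    apply div_neg_of_neg_of_pos
    · have h1 : 1 - x < Real.exp (-x) := by
        have := Real.add_one_lt_exp (x := -x) (by intro h; rw [neg_eq_zero] at h; exact hx.ne' h)
        linarith
      have h2 : Real.exp (-x) * Real.exp x = 1 := by rw [← Real.exp_add]; simp
      nlinarith [Real.exp_pos x]
    · exact pow_pos (exp_sub_one_pos hx) 2

lemma hfun_pos {x : ℝ} (hx : 0 < x) : 0 < hfun x := div_pos hx (exp_sub_one_pos hx)

lemma divdiff_sorted {x y z : ℝ} (hx : 0 < x) (hxy : x < y) (hyz : y < z) :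
    0 < hfun x / ((x - y) * (x - z)) + hfun y / ((y - x) * (y - z))
      + hfun z / ((z - x) * (z - y)) := by
  have hy : 0 < y := hx.trans hxy
  have hz : 0 < z := hy.trans hyz
  have hs := hfun_strictConvex.slope_strict_mono_adjacent (Set.mem_Ioi.2 hx) (Set.mem_Ioi.2 hz) hxy hyz
  have hxz : x < z := hxy.trans hyz
  have h1 : x - y ≠ 0 := by linarith
  have h2 : y - z ≠ 0 := by linarith
  have h3 : x - z ≠ 0 := by linarith
  have h4 : y - x ≠ 0 := by linarith
  have h5 : z - y ≠ 0 := by linarith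
  have h6 : z - x ≠ 0 := by linarith
  have key : hfun x / ((x - y) * (x - z)) + hfun y / ((y - x) * (y - z))
      + hfun z / ((z - x) * (z - y))
      = ((hfun z - hfun y) / (z - y) - (hfun y - hfun x) / (y - x)) / (z - x) := by
    field_simp
    ring
  rw [key]
  apply div_pos (by linarith) (by linarith)

lemma divdiff_pos {x y z : ℝ} (hx : 0 < x) (hy : 0 < y) (hz : 0 < z)
    (hxy : x ≠ y) (hxz : x ≠ z) (hyz : y ≠ z) :
    0 < hfun x / ((x - y) * (x - z)) + hfun y / ((y - x) * (y - z))
      + hfun z / ((z - x) * (z - y)) := by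
  rcases lt_or_gt_of_ne hxy with h1 | h1 <;> rcases lt_or_gt_of_ne hxz with h2 | h2 <;>
    rcases lt_or_gt_of_ne hyz with h3 | h3
  · exact lt_of_lt_of_eq (divdiff_sorted hx h1 h3) (by ring)
  · exact lt_of_lt_of_eq (divdiff_sorted hx h2 h3) (by ring)
  · exact absurd (h2.trans h1) (lt_asymm h3)
  · exact lt_of_lt_of_eq (divdiff_sorted hz h2 h1) (by ring)
  · exact lt_of_lt_of_eq (divdiff_sorted hy h1 h2) (by ring)
  · exact absurd (h3.trans h1) (lt_asymm h2)
  · exact lt_of_lt_of_eq (divdiff_sorted hy h3 h2) (by ring)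
  · exact lt_of_lt_of_eq (divdiff_sorted hz h3 h1) (by ring)


set_option maxHeartbeats 1000000 in
/-- For the IGO system matrix `A = [[−a₁,0,0],[g₁,−a₂,0],[0,g₂,−a₃]]`
(pairwise distinct positive `a₁,a₂,a₃`, `g₁,g₂ > 0`), `B = (1,0,0)ᵀ` and every `T > 0`,
the vector `D := A·(exp(−T·A) − I)⁻¹·B` is entrywise strictly negative. -/
theorem igo_D_vector_negative (a₁ a₂ a₃ g₁ g₂ : ℝ)
    (ha₁ : 0 < a₁) (ha₂ : 0 < a₂) (ha₃ : 0 < a₃)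
    (h12 : a₁ ≠ a₂) (h13 : a₁ ≠ a₃) (h23 : a₂ ≠ a₃)
    (hg₁ : 0 < g₁) (hg₂ : 0 < g₂)
    (A : Matrix (Fin 3) (Fin 3) ℝ)
    (hA : A = !![-a₁, 0, 0; g₁, -a₂, 0; 0, g₂, -a₃])
    (B : Fin 3 → ℝ) (hB : B = ![1, 0, 0])
    (T : ℝ) (hT : 0 < T)
    (D : Fin 3 → ℝ)
    (hD : D = A.mulVec (((NormedSpace.exp ((-T) • A) - 1)⁻¹).mulVec B)) :
    ∀ i, D i < 0 := by
  have hd21 : a₂ - a₁ ≠ 0 := sub_ne_zero.2 (Ne.symm h12)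
  have hd31 : a₃ - a₁ ≠ 0 := sub_ne_zero.2 (Ne.symm h13)
  have hd32 : a₃ - a₂ ≠ 0 := sub_ne_zero.2 (Ne.symm h23)
  have hw1 : Real.exp (T*a₁) - 1 ≠ 0 := ne_of_gt (sub_pos.2 (Real.one_lt_exp_iff.2 (by positivity)))
  have hw2 : Real.exp (T*a₂) - 1 ≠ 0 := ne_of_gt (sub_pos.2 (Real.one_lt_exp_iff.2 (by positivity)))
  have hw3 : Real.exp (T*a₃) - 1 ≠ 0 := ne_of_gt (sub_pos.2 (Real.one_lt_exp_iff.2 (by positivity)))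
  set P : Matrix (Fin 3) (Fin 3) ℝ :=
    !![1,0,0; g₁/(a₂-a₁),1,0; g₁*g₂/((a₂-a₁)*(a₃-a₁)), g₂/(a₃-a₂),1] with hP
  set Q : Matrix (Fin 3) (Fin 3) ℝ :=
    !![1,0,0; -(g₁/(a₂-a₁)),1,0; g₁*g₂/((a₃-a₂)*(a₃-a₁)), -(g₂/(a₃-a₂)),1] with hQ
  have hPQ : P * Q = 1 := by
    ext i j
    fin_cases i <;> fin_cases j <;>
      simp [hP, hQ, Matrix.mul_apply, Fin.sum_univ_three, Matrix.one_apply] <;>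
      field_simp <;> ring
  have hQP : Q * P = 1 := by
    ext i j
    fin_cases i <;> fin_cases j <;>
      simp [hP, hQ, Matrix.mul_apply, Fin.sum_univ_three, Matrix.one_apply] <;>
      field_simp <;> ring
  have hcancel : ∀ X : Matrix (Fin 3) (Fin 3) ℝ, Q * (P * X) = X := fun X => by
    rw [← mul_assoc, hQP, one_mul]
  have hassoc : ∀ X Y : Matrix (Fin 3) (Fin 3) ℝ,
      (P * X * Q) * (P * Y * Q) = P * (X * Y) * Q := by
    intro X Y; simp only [mul_assoc, hcancel]
  set v : Fin 3 → ℝ := ![T*a₁, T*a₂, T*a₃] with hv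
  have hdiagmat : ∀ u : Fin 3 → ℝ, (Matrix.diagonal u : Matrix (Fin 3) (Fin 3) ℝ)
      = !![u 0,0,0; 0,u 1,0; 0,0,u 2] := by
    intro u
    ext i j
    fin_cases i <;> fin_cases j <;>
      simp [Matrix.diagonal_apply, Matrix.vecHead, Matrix.vecTail]
  have hdiag : (-T) • A = P * Matrix.diagonal v * Q := by
    rw [hdiagmat, hA]
    ext i j
    fin_cases i <;> fin_cases j <;>
      simp [hP, hQ, hv, Matrix.mul_apply, Fin.sum_univ_three, Matrix.smul_apply] <;>
      field_simp <;> ring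
  have hUnit : IsUnit P := ⟨⟨P, Q, hPQ, hQP⟩, rfl⟩
  have hPinv : P⁻¹ = Q := Matrix.inv_eq_right_inv hPQ
  have hexp : NormedSpace.exp ((-T) • A)
      = P * Matrix.diagonal (fun i => Real.exp (v i)) * Q := by
    have hpi : NormedSpace.exp v = fun i => Real.exp (v i) := by
      rw [Pi.exp_def]
      funext i
      exact (congrFun Real.exp_eq_exp_ℝ (v i)).symm
    rw [hdiag, ← hPinv, Matrix.exp_conj P _ hUnit, Matrix.exp_diagonal, hPinv, hpi]
  have hM : NormedSpace.exp ((-T) • A) - 1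
      = P * Matrix.diagonal (fun i => Real.exp (v i) - 1) * Q := by
    have h1 : Matrix.diagonal (fun i => Real.exp (v i) - 1)
        = Matrix.diagonal (fun i => Real.exp (v i)) - 1 := by
      rw [← Matrix.diagonal_one, Matrix.diagonal_sub]
    rw [hexp, h1, Matrix.mul_sub, Matrix.mul_one, Matrix.sub_mul, hPQ]
  have hvne : ∀ i, Real.exp (v i) - 1 ≠ 0 := by
    intro i; fin_cases i <;> assumption
  have hMinv : (NormedSpace.exp ((-T) • A) - 1)⁻¹
      = P * Matrix.diagonal (fun i => (Real.exp (v i) - 1)⁻¹) * Q := by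
    apply Matrix.inv_eq_right_inv
    rw [hM, hassoc, Matrix.diagonal_mul_diagonal]
    have : (fun i => (Real.exp (v i) - 1) * (Real.exp (v i) - 1)⁻¹) = (fun _ : Fin 3 => (1:ℝ)) := by
      funext i; exact mul_inv_cancel₀ (hvne i)
    rw [this, Matrix.diagonal_one, mul_one, hPQ]
  have hAdiag : A = P * Matrix.diagonal ![-a₁,-a₂,-a₃] * Q := by
    rw [hdiagmat, hA]
    ext i j
    fin_cases i <;> fin_cases j <;>
      simp [hP, hQ, Matrix.mul_apply, Fin.sum_univ_three] <;>
      field_simp <;> ring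
  have hprod : A * (P * Matrix.diagonal (fun i => (Real.exp (v i) - 1)⁻¹) * Q)
      = P * Matrix.diagonal (fun i => (![-a₁,-a₂,-a₃] i) * (Real.exp (v i) - 1)⁻¹) * Q := by
    rw [hAdiag, hassoc, Matrix.diagonal_mul_diagonal]
  have hDf : D = (P * Matrix.diagonal
      (fun i => (![-a₁,-a₂,-a₃] i) * (Real.exp (v i) - 1)⁻¹) * Q).mulVec B := by
    rw [hD, hMinv, Matrix.mulVec_mulVec, hprod]
  rw [hdiagmat] at hDf
  have hT' : T ≠ 0 := ne_of_gt hT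
  have n21 : T*a₂ - T*a₁ ≠ 0 := by rw [← mul_sub]; exact mul_ne_zero hT' hd21
  have n12 : T*a₁ - T*a₂ ≠ 0 := by rw [← mul_sub]; exact mul_ne_zero hT' (by intro h; exact hd21 (by linarith))
  have n31 : T*a₃ - T*a₁ ≠ 0 := by rw [← mul_sub]; exact mul_ne_zero hT' hd31
  have n13 : T*a₁ - T*a₃ ≠ 0 := by rw [← mul_sub]; exact mul_ne_zero hT' (by intro h; exact hd31 (by linarith))
  have n32 : T*a₃ - T*a₂ ≠ 0 := by rw [← mul_sub]; exact mul_ne_zero hT' hd32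
  have n23 : T*a₂ - T*a₃ ≠ 0 := by rw [← mul_sub]; exact mul_ne_zero hT' (by intro h; exact hd32 (by linarith))
  have hD0 : D 0 = -(hfun (T*a₁)) / T := by
    rw [hDf, hB]
    simp [hP, hQ, hv, Matrix.mulVec, Matrix.mul_apply, dotProduct, Fin.sum_univ_three]
    unfold hfun
    set E₁ := Real.exp (T*a₁) with hE₁
    field_simp
  have hD1 : D 1 = g₁ * ((hfun (T*a₂) - hfun (T*a₁)) / (T*a₂ - T*a₁)) := by
    rw [hDf, hB]
    simp [hP, hQ, hv, Matrix.mulVec, Matrix.mul_apply, dotProduct, Fin.sum_univ_three]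
    unfold hfun
    set E₁ := Real.exp (T*a₁) with hE₁
    set E₂ := Real.exp (T*a₂) with hE₂
    field_simp
    ring
  have hD2 : D 2 = -(g₁*g₂*T) * (hfun (T*a₁)/((T*a₁-T*a₂)*(T*a₁-T*a₃))
    + hfun (T*a₂)/((T*a₂-T*a₁)*(T*a₂-T*a₃))
    + hfun (T*a₃)/((T*a₃-T*a₁)*(T*a₃-T*a₂))) := by
    rw [hDf, hB]
    simp [hP, hQ, hv, Matrix.mulVec, Matrix.mul_apply, dotProduct, Fin.sum_univ_three]
    unfold hfun
    set E₁ := Real.exp (T*a₁) with hE₁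
    set E₂ := Real.exp (T*a₂) with hE₂
    set E₃ := Real.exp (T*a₃) with hE₃
    have hsplit : -(g₁ * g₂ * T *
        (T * a₁ / (E₁ - 1) / ((T * a₁ - T * a₂) * (T * a₁ - T * a₃)) +
            T * a₂ / (E₂ - 1) / ((T * a₂ - T * a₁) * (T * a₂ - T * a₃)) +
          T * a₃ / (E₃ - 1) / ((T * a₃ - T * a₁) * (T * a₃ - T * a₂))))
        = -(g₁ * g₂ * T * (T * a₁ / (E₁ - 1) / ((T * a₁ - T * a₂) * (T * a₁ - T * a₃))))
          + -(g₁ * g₂ * T * (T * a₂ / (E₂ - 1) / ((T * a₂ - T * a₁) * (T * a₂ - T * a₃))))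
          + -(g₁ * g₂ * T * (T * a₃ / (E₃ - 1) / ((T * a₃ - T * a₁) * (T * a₃ - T * a₂)))) := by
      ring
    rw [hsplit]
    congr 1
    congr 1
    · field_simp
      ring
    · field_simp
      ring
    · field_simp
  have hx1 : (0:ℝ) < T*a₁ := mul_pos hT ha₁
  have hx2 : (0:ℝ) < T*a₂ := mul_pos hT ha₂
  have hx3 : (0:ℝ) < T*a₃ := mul_pos hT ha₃
  intro i
  have c0 : D 0 < 0 := by
    rw [hD0]
    exact div_neg_of_neg_of_pos (neg_lt_zero.2 (hfun_pos hx1)) hT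
  have c1 : D 1 < 0 := by
    rw [hD1]
    rcases lt_or_gt_of_ne h12 with h | h
    · have hlt : T*a₁ < T*a₂ := by nlinarith
      have := hfun_strictAnti (Set.mem_Ioi.2 hx1) (Set.mem_Ioi.2 hx2) hlt
      exact mul_neg_of_pos_of_neg hg₁ (div_neg_of_neg_of_pos (by linarith) (by linarith))
    · have hlt : T*a₂ < T*a₁ := by nlinarith
      have := hfun_strictAnti (Set.mem_Ioi.2 hx2) (Set.mem_Ioi.2 hx1) hlt
      exact mul_neg_of_pos_of_neg hg₁ (div_neg_of_pos_of_neg (by linarith) (by linarith))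
  have c2 : D 2 < 0 := by
    rw [hD2]
    have hS := divdiff_pos hx1 hx2 hx3 (sub_ne_zero.1 n12) (sub_ne_zero.1 n13) (sub_ne_zero.1 n23)
    apply mul_neg_of_neg_of_pos
    · have : (0:ℝ) < g₁*g₂*T := by positivity
      linarith
    · exact hS
  fin_cases i
  · exact c0
  · exact c1
  · exact c2
end

section
/- The function ν(z) := z/(e^{−z} − 1) is strictly negative, strictly decreasing, and strictly concave on the interval (−∞, 0). -/
lemma aux1 (w : ℝ) (hw : 0 < w) : 0 < (w - 1) * Real.exp w + 1 := by
  have key : StrictMonoOn (fun w : ℝ => (w - 1) * Real.exp w + 1) (Set.Ici 0) := by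
    apply strictMonoOn_of_deriv_pos (convex_Ici 0)
    · fun_prop
    · intro x hx
      rw [interior_Ici] at hx
      have h1 : HasDerivAt (fun w : ℝ => (w - 1) * Real.exp w + 1)
          (1 * Real.exp x + (x - 1) * Real.exp x) x :=
        (((hasDerivAt_id x).sub_const 1).mul (Real.hasDerivAt_exp x)).add_const 1
      rw [h1.deriv]
      nlinarith [Real.exp_pos x, Set.mem_Ioi.mp hx]
  have := key Set.self_mem_Ici (Set.mem_Ici.mpr hw.le) hw
  simpa using this

lemma aux2 (w : ℝ) (hw : 0 < w) : 0 < (w - 2) * Real.exp w + w + 2 := by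
  have key : StrictMonoOn (fun w : ℝ => (w - 2) * Real.exp w + w + 2) (Set.Ici 0) := by
    apply strictMonoOn_of_deriv_pos (convex_Ici 0)
    · fun_prop
    · intro x hx
      rw [interior_Ici] at hx
      have h1 : HasDerivAt (fun w : ℝ => (w - 2) * Real.exp w + w + 2)
          (1 * Real.exp x + (x - 2) * Real.exp x + 1) x :=
        (((((hasDerivAt_id x).sub_const 2).mul (Real.hasDerivAt_exp x)).add
          (hasDerivAt_id x)).add_const 2)
      rw [h1.deriv]
      nlinarith [aux1 x (Set.mem_Ioi.mp hx), Real.exp_pos x]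
  have := key Set.self_mem_Ici (Set.mem_Ici.mpr hw.le) hw
  simpa using this

lemma hE (z : ℝ) : HasDerivAt (fun z : ℝ => Real.exp (-z)) (-Real.exp (-z)) z := by
  simpa [Function.comp_def] using (Real.hasDerivAt_exp (-z)).comp z (hasDerivAt_neg z)

lemma hDpos (z : ℝ) (hz : z < 0) : 0 < Real.exp (-z) - 1 := by
  nlinarith [Real.add_one_le_exp (-z)]

lemma hfd (z : ℝ) (hz : z < 0) :
    HasDerivAt (fun z : ℝ => z / (Real.exp (-z) - 1))
      ((1 * (Real.exp (-z) - 1) - z * (-Real.exp (-z))) / (Real.exp (-z) - 1) ^ 2) z :=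
  (hasDerivAt_id z).div ((hE z).sub_const 1) (hDpos z hz).ne'

/-- The function `ν(z) := z/(e^{−z} − 1)` is strictly negative, strictly
decreasing, and strictly concave on the interval `(−∞, 0)`. -/
theorem nu_neg_strictAnti_strictConcave :
    (∀ z : ℝ, z < 0 → z / (Real.exp (-z) - 1) < 0) ∧
    StrictAntiOn (fun z : ℝ => z / (Real.exp (-z) - 1)) (Set.Iio 0) ∧
    StrictConcaveOn ℝ (Set.Iio 0) (fun z : ℝ => z / (Real.exp (-z) - 1)) := by
  have hcont : ContinuousOn (fun z : ℝ => z / (Real.exp (-z) - 1)) (Set.Iio 0) := by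
    apply ContinuousOn.div continuousOn_id (by fun_prop)
    intro x hx
    exact (hDpos x hx).ne'
  refine ⟨fun z hz => div_neg_of_neg_of_pos hz (hDpos z hz), ?_, ?_⟩
  · apply strictAntiOn_of_deriv_neg (convex_Iio 0) hcont
    intro x hx
    rw [interior_Iio] at hx
    rw [(hfd x hx).deriv]
    apply div_neg_of_neg_of_pos
    · nlinarith [aux1 (-x) (neg_pos.mpr (Set.mem_Iio.mp hx)), Real.exp_pos (-x)]
    · exact pow_pos (hDpos x hx) 2
  · apply strictConcaveOn_of_deriv2_neg (convex_Iio 0) hcont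
    intro x hx
    rw [interior_Iio] at hx
    have heq : deriv (fun z : ℝ => z / (Real.exp (-z) - 1)) =ᶠ[nhds x]
        (fun z : ℝ => (1 * (Real.exp (-z) - 1) - z * (-Real.exp (-z))) /
          (Real.exp (-z) - 1) ^ 2) := by
      filter_upwards [Iio_mem_nhds hx] with y hy using (hfd y hy).deriv
    have h2 : deriv^[2] (fun z : ℝ => z / (Real.exp (-z) - 1)) x =
        deriv (fun z : ℝ => (1 * (Real.exp (-z) - 1) - z * (-Real.exp (-z))) /
          (Real.exp (-z) - 1) ^ 2) x := by
      simp only [Function.iterate_succ, Function.iterate_zero, Function.comp_apply, id]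
      exact heq.deriv_eq
    rw [h2]
    have hNum : HasDerivAt (fun z : ℝ => 1 * (Real.exp (-z) - 1) - z * (-Real.exp (-z)))
        (1 * (-Real.exp (-x)) - (1 * (-Real.exp (-x)) + x * (-(-Real.exp (-x))))) x :=
      (((hE x).sub_const 1).const_mul 1).sub ((hasDerivAt_id x).mul ((hE x).neg))
    have hDen : HasDerivAt (fun z : ℝ => (Real.exp (-z) - 1) ^ 2)
        ((2 : ℕ) * (Real.exp (-x) - 1) ^ 1 * (-Real.exp (-x))) x :=
      ((hE x).sub_const 1).pow 2
    have hg := hNum.div hDen (pow_ne_zero 2 (hDpos x hx).ne')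
    rw [HasDerivAt.deriv (f := fun z : ℝ => (1 * (Real.exp (-z) - 1) - z * (-Real.exp (-z))) /
          (Real.exp (-z) - 1) ^ 2) hg]
    apply div_neg_of_neg_of_pos
    · have he : (0:ℝ) < Real.exp (-x) := Real.exp_pos (-x)
      have hD := hDpos x hx
      have ha := aux2 (-x) (neg_pos.mpr (Set.mem_Iio.mp hx))
      push_cast
      nlinarith [mul_pos (mul_pos he hD) ha]
    · exact pow_pos (pow_pos (hDpos x hx) 2) 2
end

section
/- Let A be a 3×3 real matrix and let M(A) denote the sum of its three 2×2 principal minors, M(A) = (a₂₂a₃₃ − a₂₃a₃₂) + (a₁₁a₃₃ − a₃₁a₁₃) + (a₁₁a₂₂ − a₂₁a₁₂). Then A is Schur stable (every complex eigenvalue of A has modulus strictly less than 1) if and only if the following three conditions hold: (1) |det A| < 1; (2) |tr A + det A| < 1 + M(A); (3) |tr A · det A − M(A)| < 1 − (det A)². -/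
set_option maxHeartbeats 1000000

open Matrix

/-- The sum of the three `2×2` principal minors of a `3×3` real matrix. -/
def principalMinorsSum (A : Matrix (Fin 3) (Fin 3) ℝ) : ℝ :=
  (A 1 1 * A 2 2 - A 1 2 * A 2 1) + (A 0 0 * A 2 2 - A 2 0 * A 0 2) +
    (A 0 0 * A 1 1 - A 1 0 * A 0 1)

lemma cubic_has_real_root (a b c : ℝ) : ∃ r : ℝ, r^3 + a*r^2 + b*r + c = 0 := by
  set f : ℝ → ℝ := fun x => x^3 + a*x^2 + b*x + c with hf
  set M : ℝ := 1 + |a| + |b| + |c| with hMdef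
  have hM : 1 ≤ M := by nlinarith [abs_nonneg a, abs_nonneg b, abs_nonneg c]
  have hcont : ContinuousOn f (Set.Icc (-M) M) := (by continuity : Continuous f).continuousOn
  have hle : -M ≤ M := by linarith
  have h1 : f (-M) ≤ 0 := by
    simp only [hf]
    nlinarith [le_abs_self a, neg_abs_le a, le_abs_self b, neg_abs_le b, le_abs_self c,
      neg_abs_le c, abs_nonneg a, abs_nonneg b, abs_nonneg c, sq_nonneg M]
  have h2 : 0 ≤ f M := by
    simp only [hf]
    nlinarith [le_abs_self a, neg_abs_le a, le_abs_self b, neg_abs_le b, le_abs_self c,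
      neg_abs_le c, abs_nonneg a, abs_nonneg b, abs_nonneg c, sq_nonneg M]
  have := intermediate_value_Icc hle hcont (Set.mem_Icc.mpr ⟨h1, h2⟩)
  obtain ⟨r, _, hr⟩ := this
  exact ⟨r, hr⟩

lemma S_to_T (r B C : ℝ) (hr1 : -1 < r) (hr2 : r < 1) (hC1 : -1 < C) (hC2 : C < 1)
    (hB1 : -(1+C) < B) (hB2 : B < 1+C) :
    (-1 < r*C ∧ r*C < 1) ∧
    ((1-r)*(1+B+C) > 0 ∧ (1+r)*(1-B+C) > 0) ∧
    ((1-C)*(1+r*B+r^2*C) > 0 ∧ (1+C)*(1-r^2*C) - r*B*(1-C) > 0) := by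
  have k1 : (0:ℝ) < 1 - r*C := by nlinarith [mul_pos (by linarith : (0:ℝ) < 1-r) (by linarith : (0:ℝ) < 1-C), mul_pos (by linarith : (0:ℝ) < 1+r) (by linarith : (0:ℝ) < 1+C)]
  have k2 : (0:ℝ) < 1 + r*C := by nlinarith [mul_pos (by linarith : (0:ℝ) < 1-r) (by linarith : (0:ℝ) < 1+C), mul_pos (by linarith : (0:ℝ) < 1+r) (by linarith : (0:ℝ) < 1-C)]
  refine ⟨⟨by linarith, by linarith⟩, ⟨?_, ?_⟩, ?_, ?_⟩
  · exact mul_pos (by linarith) (by linarith)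
  · exact mul_pos (by linarith) (by linarith)
  · rcases le_or_gt 0 r with h | h
    · nlinarith [mul_nonneg h (by linarith : (0:ℝ) ≤ B + (1+C)), mul_pos (by linarith : (0:ℝ) < 1-r) k1]
    · nlinarith [mul_nonneg (by linarith : (0:ℝ) ≤ -r) (by linarith : (0:ℝ) ≤ (1+C) - B), mul_pos (by linarith : (0:ℝ) < 1+r) k2]
  · rcases le_or_gt 0 r with h | h
    · nlinarith [mul_nonneg (mul_nonneg h (by linarith : (0:ℝ) ≤ (1+C) - B)) (by linarith : (0:ℝ) ≤ 1-C), mul_pos (mul_pos (by linarith : (0:ℝ) < 1-r) k2) (by linarith : (0:ℝ) < 1+C)]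
    · nlinarith [mul_nonneg (mul_nonneg (by linarith : (0:ℝ) ≤ -r) (by linarith : (0:ℝ) ≤ B + (1+C))) (by linarith : (0:ℝ) ≤ 1-C), mul_pos (mul_pos (by linarith : (0:ℝ) < 1+r) k1) (by linarith : (0:ℝ) < 1+C)]

lemma T_to_S (r B C : ℝ) (h0a : -1 < r*C) (h0b : r*C < 1)
    (P1 : (1-r)*(1+B+C) > 0) (P2 : (1+r)*(1-B+C) > 0)
    (Q1 : (1-C)*(1+r*B+r^2*C) > 0) :
    (-1 < r ∧ r < 1) ∧ C < 1 ∧ 0 < 1+B+C ∧ 0 < 1-B+C := by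
  have hr2 : r < 1 := by
    by_contra h
    push_neg at h
    have hr : 1 < r := lt_of_le_of_ne h (fun he => by rw [←he] at P1; simp at P1)
    have hC : C < 1 := by nlinarith
    have h5 : 1 + B + C < 0 := by nlinarith
    have h6 : 0 < 1 + r*B + r^2*C := by nlinarith
    nlinarith [mul_pos (by linarith : (0:ℝ) < r - 1) (by linarith : (0:ℝ) < 1 - r*C)]
  have hr1 : -1 < r := by
    by_contra h
    push_neg at h
    have hr : r < -1 := lt_of_le_of_ne (by linarith) (fun he => by simp [he] at P2)
    have hC : C < 1 := by nlinarith
    have h5 : 1 - B + C < 0 := by nlinarith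
    have h6 : 0 < 1 + r*B + r^2*C := by nlinarith
    nlinarith [mul_pos (by linarith : (0:ℝ) < -1 - r) (by linarith : (0:ℝ) < 1 + r*C)]
  have hC : C < 1 := by
    by_contra h
    push_neg at h
    have hCgt : 1 < C := lt_of_le_of_ne h (fun he => by rw [←he] at Q1; simp at Q1)
    have h6 : 1 + r*B + r^2*C < 0 := by nlinarith
    have hB1 : 0 < 1 + B + C := by nlinarith
    have hB2 : 0 < 1 - B + C := by nlinarith
    rcases le_or_gt 0 r with hs | hs
    · nlinarith [mul_nonneg hs (by linarith : (0:ℝ) ≤ B + (1+C)), mul_pos (by linarith : (0:ℝ) < 1-r) (by linarith : (0:ℝ) < 1 - r*C)]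
    · nlinarith [mul_nonneg (by linarith : (0:ℝ) ≤ -r) (by linarith : (0:ℝ) ≤ (1+C) - B), mul_pos (by linarith : (0:ℝ) < 1+r) (by linarith : (0:ℝ) < 1 + r*C)]
  exact ⟨⟨hr1, hr2⟩, hC, by nlinarith, by nlinarith⟩

lemma quad_real_root (B C s : ℝ) (h : s^2 + B*s + C = 0) (hC : C < 1)
    (h1 : 0 < 1+B+C) (h2 : 0 < 1-B+C) : -1 < s ∧ s < 1 := by
  constructor
  · by_contra hh
    push_neg at hh
    nlinarith [mul_nonneg (by linarith : (0:ℝ) ≤ -1-s) (by linarith : (0:ℝ) ≤ -s-C)]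
  · by_contra hh
    push_neg at hh
    nlinarith [mul_nonneg (by linarith : (0:ℝ) ≤ s-1) (by linarith : (0:ℝ) ≤ s-C)]

lemma quad_nonreal (B C : ℝ) (μ : ℂ) (h : μ^2 + (B:ℂ)*μ + (C:ℂ) = 0) (him : μ.im ≠ 0) :
    ‖μ‖ ^ 2 = C := by
  have h1 := congrArg Complex.re h
  have h2 := congrArg Complex.im h
  simp only [Complex.add_re, Complex.add_im, Complex.mul_re, Complex.mul_im, pow_two,
    Complex.ofReal_re, Complex.ofReal_im, Complex.zero_re, Complex.zero_im] at h1 h2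
  have hfac : (2*μ.re + B) * μ.im = 0 := by linarith [h2]
  have hB : B = -2 * μ.re := by
    rcases mul_eq_zero.mp hfac with h' | h'
    · linarith
    · exact absurd h' him
  rw [hB] at h1
  rw [Complex.sq_norm, Complex.normSq_apply]
  linarith

lemma cubic_jury (a b c : ℝ) :
    (∀ μ : ℂ, μ^3 + a*μ^2 + b*μ + c = 0 → ‖μ‖ < 1) ↔
    (|c| < 1 ∧ |a + c| < 1 + b ∧ |b - a*c| < 1 - c^2) := by
  obtain ⟨r, hr⟩ := cubic_has_real_root a b c
  set B : ℝ := a + r with hBd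
  set C : ℝ := b + a*r + r^2 with hCd
  have ha : a = B - r := by rw [hBd]; ring
  have hb : b = C - r*B := by rw [hBd, hCd]; ring
  have hc : c = -(r*C) := by rw [hCd]; linear_combination hr
  have key : ∀ μ : ℂ, μ^3 + (a:ℂ)*μ^2 + (b:ℂ)*μ + (c:ℂ) = (μ - (r:ℂ)) * (μ^2 + (B:ℂ)*μ + (C:ℂ)) := by
    intro μ
    have ha' : (a:ℂ) = (B:ℂ) - (r:ℂ) := by exact_mod_cast congrArg (fun x : ℝ => (x:ℂ)) ha
    have hb' : (b:ℂ) = (C:ℂ) - (r:ℂ)*(B:ℂ) := by push_cast [hb]; ring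
    have hc' : (c:ℂ) = -((r:ℂ)*(C:ℂ)) := by push_cast [hc]; ring
    rw [ha', hb', hc']; ring
  have ea : a + c = (B - r) - r*C := by linear_combination ha + hc
  have eb : b = C - r*B := hb
  have e3 : b - a*c = (C - r*B) + (B - r)*(r*C) := by linear_combination hb - a*hc + r*C*ha
  have e4 : 1 - c^2 = 1 - (r*C)^2 := by linear_combination (-(c - r*C))*hc
  constructor
  · intro h
    have hrabs : ‖(r:ℂ)‖ < 1 := h r (by rw [key]; ring)
    rw [Complex.norm_real, Real.norm_eq_abs] at hrabs
    obtain ⟨hr1, hr2⟩ := abs_lt.mp hrabs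
    have hquad : ∀ t : ℝ, t^2 + B*t + C = 0 → -1 < t ∧ t < 1 := by
      intro t ht
      have htC : ((t:ℂ))^2 + (B:ℂ)*(t:ℂ) + (C:ℂ) = 0 := by exact_mod_cast congrArg (fun x : ℝ => (x:ℂ)) ht
      have := h t (by rw [key, htC, mul_zero])
      rw [Complex.norm_real, Real.norm_eq_abs] at this
      exact abs_lt.mp this
    have hS : (-1 < C ∧ C < 1) ∧ -(1+C) < B ∧ B < 1+C := by
      rcases le_or_gt 0 (B^2 - 4*C) with hD | hD
      · set s : ℝ := Real.sqrt (B^2 - 4*C) with hsd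
        have hs : s^2 = B^2 - 4*C := Real.sq_sqrt hD
        set u : ℝ := (-B+s)/2 with hud
        set v : ℝ := (-B-s)/2 with hvd
        obtain ⟨hu1, hu2⟩ := hquad u (by rw [hud]; linear_combination (1/4 : ℝ)*hs)
        obtain ⟨hv1, hv2⟩ := hquad v (by rw [hvd]; linear_combination (1/4 : ℝ)*hs)
        have huv : u + v = -B := by rw [hud, hvd]; ring
        have hmul : u * v = C := by rw [hud, hvd]; linear_combination (-(1/4 : ℝ))*hs
        have p1 : (0:ℝ) < (1-u)*(1-v) := mul_pos (by linarith) (by linarith)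
        have p2 : (0:ℝ) < (1+u)*(1+v) := mul_pos (by linarith) (by linarith)
        have p3 : (0:ℝ) < (1-u)*(1+v) := mul_pos (by linarith) (by linarith)
        have p4 : (0:ℝ) < (1+u)*(1-v) := mul_pos (by linarith) (by linarith)
        exact ⟨⟨by linarith, by linarith⟩, by linarith, by linarith⟩
      · set y : ℝ := Real.sqrt (4*C - B^2) / 2 with hyd
        have hy : y^2 = (4*C - B^2)/4 := by
          rw [hyd, div_pow, Real.sq_sqrt (by linarith)]; norm_num
        have hypos : 0 < y := by rw [hyd]; exact div_pos (Real.sqrt_pos.mpr (by linarith)) two_pos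
        set μ0 : ℂ := (↑(-B/2) : ℂ) + (y:ℂ) * Complex.I with hμ0d
        have hy' : ((y:ℝ):ℂ)^2 = (((4*C - B^2) : ℝ) : ℂ)/4 := by
          rw [← Complex.ofReal_pow, hy]; push_cast; ring
        have hroot : μ0^2 + (B:ℂ)*μ0 + (C:ℂ) = 0 := by
          rw [hμ0d]; push_cast at hy' ⊢
          linear_combination ((y:ℝ):ℂ)^2 * Complex.I_sq - hy'
        have him0 : μ0.im = y := by simp [hμ0d]
        have habs := h μ0 (by rw [key, hroot, mul_zero])
        have habs2 : ‖μ0‖ ^ 2 = C := quad_nonreal B C μ0 hroot (by rw [him0]; exact ne_of_gt hypos)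
        have hC2 : C < 1 := by nlinarith [norm_nonneg μ0]
        have hC0 : 0 < C := by nlinarith [sq_nonneg B]
        exact ⟨⟨by linarith, hC2⟩, by nlinarith [sq_nonneg (1-C)], by nlinarith [sq_nonneg (1-C)]⟩
    obtain ⟨⟨hC1, hC2⟩, hB1, hB2⟩ := hS
    obtain ⟨⟨k1, k2⟩, ⟨P1, P2⟩, Q1, Q2⟩ := S_to_T r B C hr1 hr2 hC1 hC2 hB1 hB2
    refine ⟨?_, ?_, ?_⟩
    · rw [hc, abs_neg, abs_lt]; exact ⟨k1, k2⟩
    · rw [ea, eb, abs_lt]; constructor <;> linarith [P1, P2]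
    · rw [e3, e4, abs_lt]; constructor <;> linarith [Q1, Q2]
  · rintro ⟨h1, h2, h3⟩ μ hμ
    obtain ⟨h1a, h1b⟩ := abs_lt.mp h1
    obtain ⟨h2a, h2b⟩ := abs_lt.mp h2
    obtain ⟨h3a, h3b⟩ := abs_lt.mp h3
    rw [hc] at h1a h1b
    rw [ea, eb] at h2a h2b
    rw [e3, e4] at h3a h3b
    have P1 : (1-r)*(1+B+C) > 0 := by nlinarith [h2a]
    have P2 : (1+r)*(1-B+C) > 0 := by nlinarith [h2b]
    have Q1 : (1-C)*(1+r*B+r^2*C) > 0 := by nlinarith [h3b]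
    obtain ⟨⟨hr1, hr2⟩, hC2, hP1, hP2⟩ := T_to_S r B C (by linarith) (by linarith) P1 P2 Q1
    rw [key] at hμ
    rcases mul_eq_zero.mp hμ with h' | h'
    · have : μ = (r:ℂ) := by linear_combination h'
      rw [this, Complex.norm_real, Real.norm_eq_abs, abs_lt]; exact ⟨hr1, hr2⟩
    · by_cases him : μ.im = 0
      · have hμre : μ = ((μ.re : ℝ) : ℂ) := Complex.ext rfl (by simp [him])
        rw [hμre] at h'
        have hre : (μ.re)^2 + B*(μ.re) + C = 0 := by exact_mod_cast h'
        obtain ⟨hs1, hs2⟩ := quad_real_root B C μ.re hre hC2 hP1 hP2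
        rw [hμre, Complex.norm_real, Real.norm_eq_abs, abs_lt]; exact ⟨hs1, hs2⟩
      · have habs2 : ‖μ‖ ^ 2 = C := quad_nonreal B C μ h' him
        nlinarith [norm_nonneg μ, habs2, hC2]

/-- Schur stability criterion for a `3×3` real matrix: all complex
eigenvalues of `A` have modulus strictly less than `1` if and only if
(1) `|det A| < 1`, (2) `|tr A + det A| < 1 + M(A)`, and
(3) `|tr A · det A − M(A)| < 1 − (det A)²`, where `M(A)` is the sum of the three `2×2`
principal minors of `A`. -/
theorem schur_stability_criterion_3x3 (A : Matrix (Fin 3) (Fin 3) ℝ) :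
    (∀ μ ∈ spectrum ℂ (A.map (Complex.ofReal : ℝ → ℂ)), ‖μ‖ < 1) ↔
    (|A.det| < 1 ∧
     |A.trace + A.det| < 1 + principalMinorsSum A ∧
     |A.trace * A.det - principalMinorsSum A| < 1 - A.det ^ 2) := by
  have hspec : ∀ μ : ℂ, μ ∈ spectrum ℂ (A.map (Complex.ofReal : ℝ → ℂ)) ↔
      μ^3 + ((-(A.trace) : ℝ) : ℂ) * μ^2 + ((principalMinorsSum A : ℝ) : ℂ) * μ
        + ((-(A.det) : ℝ) : ℂ) = 0 := by
    intro μ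
    rw [spectrum.mem_iff, Matrix.isUnit_iff_isUnit_det, isUnit_iff_ne_zero, not_ne_iff]
    rw [Matrix.det_fin_three]
    simp [Matrix.algebraMap_matrix_apply, Matrix.map_apply, Matrix.trace_fin_three,
      Matrix.det_fin_three, principalMinorsSum]
    constructor <;> intro h <;> [linear_combination h; linear_combination h]
  set t : ℝ := A.trace with ht
  set m : ℝ := principalMinorsSum A with hm
  set d : ℝ := A.det with hd
  have hj := cubic_jury (-t) m (-d)
  constructor
  · intro h
    have hres := hj.mp (fun μ hμ => h μ ((hspec μ).mpr hμ))
    obtain ⟨c1, c2, c3⟩ := hres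
    refine ⟨by rwa [abs_neg] at c1, ?_, ?_⟩
    · have h5 : -t + -d = -(t + d) := by ring
      rw [h5, abs_neg] at c2; exact c2
    · have h5 : m - (-t)*(-d) = -(t*d - m) := by ring
      have h6 : 1 - (-d)^2 = 1 - d^2 := by ring
      rw [h5, abs_neg, h6] at c3; exact c3
  · rintro ⟨c1, c2, c3⟩ μ hμ
    have hroot := (hspec μ).mp hμ
    refine hj.mpr ⟨by rwa [abs_neg], ?_, ?_⟩ μ hroot
    · have h5 : -t + -d = -(t + d) := by ring
      rw [h5, abs_neg]; exact c2
    · have h5 : m - (-t)*(-d) = -(t*d - m) := by ring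
      have h6 : 1 - (-d)^2 = 1 - d^2 := by ring
      rw [h5, abs_neg, h6]; exact c3
end

section
/- Let a₁, a₂, a₃ be pairwise distinct positive reals, g₁, g₂ > 0, A = [[−a₁,0,0],[g₁,−a₂,0],[0,g₂,−a₃]], C = (0,0,1), and T > 0. Then the pair (exp(T·A), C) is observable: the 3×3 observability matrix whose rows are C, C·exp(T·A), and C·exp(2T·A) is invertible. -/
open Matrix

set_option maxHeartbeats 1000000

private lemma diag3 (u v w : ℝ) :
    (Matrix.diagonal ![u, v, w] : Matrix (Fin 3) (Fin 3) ℝ) = !![u,0,0;0,v,0;0,0,w] := by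
  ext i j
  fin_cases i <;> fin_cases j <;> simp [Matrix.diagonal_apply, Matrix.vecHead, Matrix.vecTail]


/-- Observability of the pair `(exp(T·A), C)` for the IGO: with
`A = [[−a₁,0,0],[g₁,−a₂,0],[0,g₂,−a₃]]` (pairwise distinct positive `a₁,a₂,a₃`,
`g₁,g₂ > 0`), `C = (0,0,1)` and `T > 0`, the `3×3` observability matrix with rows
`C`, `C·exp(T·A)` and `C·exp(2T·A)` is invertible. -/
theorem igo_observability (a₁ a₂ a₃ g₁ g₂ : ℝ)
    (ha₁ : 0 < a₁) (ha₂ : 0 < a₂) (ha₃ : 0 < a₃)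
    (h12 : a₁ ≠ a₂) (h13 : a₁ ≠ a₃) (h23 : a₂ ≠ a₃)
    (hg₁ : 0 < g₁) (hg₂ : 0 < g₂)
    (A : Matrix (Fin 3) (Fin 3) ℝ)
    (hA : A = !![-a₁, 0, 0; g₁, -a₂, 0; 0, g₂, -a₃])
    (C : Fin 3 → ℝ) (hC : C = ![0, 0, 1])
    (T : ℝ) (hT : 0 < T) :
    IsUnit (Matrix.of
      ![C, Matrix.vecMul C (NormedSpace.exp (T • A)),
        Matrix.vecMul C (NormedSpace.exp ((2 * T) • A))]) := by
  subst hA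
  subst hC
  have h21 : a₂ - a₁ ≠ 0 := sub_ne_zero.mpr (Ne.symm h12)
  have h31 : a₃ - a₁ ≠ 0 := sub_ne_zero.mpr (Ne.symm h13)
  have h32 : a₃ - a₂ ≠ 0 := sub_ne_zero.mpr (Ne.symm h23)
  have hPQ : (!![1, 0, 0; g₁/(a₂-a₁), 1, 0; g₁*g₂/((a₂-a₁)*(a₃-a₁)), g₂/(a₃-a₂), 1] *
       !![1, 0, 0; -(g₁/(a₂-a₁)), 1, 0; g₁*g₂/((a₃-a₁)*(a₃-a₂)), -(g₂/(a₃-a₂)), 1]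
        : Matrix (Fin 3) (Fin 3) ℝ) = 1 := by
    ext i j
    fin_cases i <;> fin_cases j <;>
      simp [Matrix.mul_apply, Fin.sum_univ_three, Matrix.one_apply] <;>
      field_simp <;> ring
  have hQP : (!![1, 0, 0; -(g₁/(a₂-a₁)), 1, 0; g₁*g₂/((a₃-a₁)*(a₃-a₂)), -(g₂/(a₃-a₂)), 1] *
       !![1, 0, 0; g₁/(a₂-a₁), 1, 0; g₁*g₂/((a₂-a₁)*(a₃-a₁)), g₂/(a₃-a₂), 1]
        : Matrix (Fin 3) (Fin 3) ℝ) = 1 := by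
    ext i j
    fin_cases i <;> fin_cases j <;>
      simp [Matrix.mul_apply, Fin.sum_univ_three, Matrix.one_apply] <;>
      field_simp <;> ring
  set U : (Matrix (Fin 3) (Fin 3) ℝ)ˣ :=
    ⟨!![1, 0, 0; g₁/(a₂-a₁), 1, 0; g₁*g₂/((a₂-a₁)*(a₃-a₁)), g₂/(a₃-a₂), 1],
     !![1, 0, 0; -(g₁/(a₂-a₁)), 1, 0; g₁*g₂/((a₃-a₁)*(a₃-a₂)), -(g₂/(a₃-a₂)), 1],
     hPQ, hQP⟩ with hU
  have hconj : ∀ s : ℝ, s • (!![-a₁, 0, 0; g₁, -a₂, 0; 0, g₂, -a₃] : Matrix (Fin 3) (Fin 3) ℝ) =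
      (U : Matrix (Fin 3) (Fin 3) ℝ) * Matrix.diagonal ![s * -a₁, s * -a₂, s * -a₃] *
        ((U⁻¹ : (Matrix (Fin 3) (Fin 3) ℝ)ˣ) : Matrix (Fin 3) (Fin 3) ℝ) := by
    intro s
    show s • _ = !![1, 0, 0; g₁/(a₂-a₁), 1, 0; g₁*g₂/((a₂-a₁)*(a₃-a₁)), g₂/(a₃-a₂), 1] *
      Matrix.diagonal ![s * -a₁, s * -a₂, s * -a₃] *
      !![1, 0, 0; -(g₁/(a₂-a₁)), 1, 0; g₁*g₂/((a₃-a₁)*(a₃-a₂)), -(g₂/(a₃-a₂)), 1]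
    rw [diag3]
    ext i j
    fin_cases i <;> fin_cases j <;>
      simp [Matrix.mul_apply, Fin.sum_univ_three] <;>
      field_simp <;> ring
  have hexp : ∀ s : ℝ, NormedSpace.exp (s • (!![-a₁, 0, 0; g₁, -a₂, 0; 0, g₂, -a₃] : Matrix (Fin 3) (Fin 3) ℝ)) =
      !![1, 0, 0; g₁/(a₂-a₁), 1, 0; g₁*g₂/((a₂-a₁)*(a₃-a₁)), g₂/(a₃-a₂), 1] *
      !![Real.exp (s * -a₁),0,0;0,Real.exp (s * -a₂),0;0,0,Real.exp (s * -a₃)] *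
      !![1, 0, 0; -(g₁/(a₂-a₁)), 1, 0; g₁*g₂/((a₃-a₁)*(a₃-a₂)), -(g₂/(a₃-a₂)), 1] := by
    intro s
    have hv : NormedSpace.exp ![s * -a₁, s * -a₂, s * -a₃]
        = ![Real.exp (s * -a₁), Real.exp (s * -a₂), Real.exp (s * -a₃)] := by
      rw [Pi.exp_def]
      funext i
      fin_cases i <;> simp [Real.exp_eq_exp_ℝ]
    rw [hconj s, Matrix.exp_units_conj U, Matrix.exp_diagonal, hv, diag3]
    rfl
  have hrow : ∀ s : ℝ, Matrix.vecMul ![0,0,(1:ℝ)] (NormedSpace.exp (s • !![-a₁, 0, 0; g₁, -a₂, 0; 0, g₂, -a₃])) =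
      ![g₁*g₂/((a₂-a₁)*(a₃-a₁)) * Real.exp (s * -a₁)
          + (g₂/(a₃-a₂)) * (-(g₁/(a₂-a₁))) * Real.exp (s * -a₂)
          + g₁*g₂/((a₃-a₁)*(a₃-a₂)) * Real.exp (s * -a₃),
        (g₂/(a₃-a₂)) * Real.exp (s * -a₂) - (g₂/(a₃-a₂)) * Real.exp (s * -a₃),
        Real.exp (s * -a₃)] := by
    intro s
    rw [hexp s]
    funext j
    fin_cases j <;>
      simp [Matrix.vecMul, Matrix.mul_apply, dotProduct, Fin.sum_univ_three] <;>
      ring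
  rw [Matrix.isUnit_iff_isUnit_det, isUnit_iff_ne_zero, Matrix.det_fin_three]
  simp only [hrow T, hrow (2*T)]
  simp only [Matrix.of_apply, Matrix.cons_val', Matrix.cons_val_zero, Matrix.cons_val_one,
    Matrix.head_cons, Matrix.empty_val', Matrix.cons_val_fin_one, Matrix.head_fin_const,
    Matrix.cons_val_two, Matrix.tail_cons]
  set x := Real.exp (T * -a₁) with hx
  set y := Real.exp (T * -a₂) with hy
  set z := Real.exp (T * -a₃) with hz
  have hx2 : Real.exp (2*T * -a₁) = x^2 := by rw [hx, sq, ← Real.exp_add]; congr 1; ring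
  have hy2 : Real.exp (2*T * -a₂) = y^2 := by rw [hy, sq, ← Real.exp_add]; congr 1; ring
  have hz2 : Real.exp (2*T * -a₃) = z^2 := by rw [hz, sq, ← Real.exp_add]; congr 1; ring
  rw [hx2, hy2, hz2]
  have hxy : x - y ≠ 0 := by
    rw [hx, hy]
    exact sub_ne_zero.mpr (fun h => h12 (by
      have := Real.exp_injective h
      nlinarith))
  have hxz : x - z ≠ 0 := by
    rw [hx, hz]
    exact sub_ne_zero.mpr (fun h => h13 (by
      have := Real.exp_injective h
      nlinarith))
  have hyz : y - z ≠ 0 := by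
    rw [hy, hz]
    exact sub_ne_zero.mpr (fun h => h23 (by
      have := Real.exp_injective h
      nlinarith))
  have hne : -(g₁*g₂^2) * ((x-y)*(x-z)*(y-z)) / ((a₂-a₁)*(a₃-a₁)*(a₃-a₂)) ≠ 0 := by
    apply div_ne_zero
    · refine mul_ne_zero (neg_ne_zero.mpr ?_) (mul_ne_zero (mul_ne_zero hxy hxz) hyz)
      positivity
    · exact mul_ne_zero (mul_ne_zero h21 h31) h32
  refine ne_of_eq_of_ne ?_ hne
  field_simp
  ring
end

section
/- Let z₀ > 0, k₂ > 0, d > 0, and let p be a real number with p > 4 z₀ d / k₂. Then there exist two distinct reals h₁ > 0 and h₂ > 0 such that, for each h ∈ {h₁, h₂}, the Hill-type function Φ_h(z) := k₂ · (z/h)^p / (1 + (z/h)^p), defined for z > 0, has derivative Φ_h′(z₀) = d. -/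
lemma hill_aux (z₀ k₂ d p u : ℝ) (hz₀ : 0 < z₀) (hk₂ : 0 < k₂) (hd : 0 < d)
    (hp : 0 < p) (hu : 0 < u) (heq : k₂ * p * u = d * z₀ * (1 + u) ^ 2) :
    HasDerivAt (fun z : ℝ => k₂ * (z / (z₀ / u ^ p⁻¹)) ^ p /
      (1 + (z / (z₀ / u ^ p⁻¹)) ^ p)) d z₀ := by
  set h := z₀ / u ^ p⁻¹ with hh
  have hup : (0:ℝ) < u ^ p⁻¹ := Real.rpow_pos_of_pos hu _
  have hhpos : 0 < h := div_pos hz₀ hup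
  have hx : z₀ / h = u ^ p⁻¹ := by
    rw [hh]; field_simp
  have hxpos : 0 < z₀ / h := div_pos hz₀ hhpos
  have hxu : (z₀ / h) ^ p = u := by
    rw [hx, ← Real.rpow_mul hu.le, inv_mul_cancel₀ hp.ne', Real.rpow_one]
  have f1 : HasDerivAt (fun z : ℝ => z / h) (1 / h) z₀ := by
    simpa using (hasDerivAt_id z₀).div_const h
  have f2 : HasDerivAt (fun z : ℝ => (z / h) ^ p)
      (p * (z₀ / h) ^ (p - 1) * (1 / h)) z₀ :=
    by have := (Real.hasDerivAt_rpow_const (x := z₀ / h) (p := p) (Or.inl hxpos.ne')).comp z₀ f1; exact this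
  have hfv : p * (z₀ / h) ^ (p - 1) * (1 / h) = p * u / z₀ := by
    rw [Real.rpow_sub hxpos, Real.rpow_one, hxu]
    field_simp
  rw [hfv] at f2
  have hden : 1 + (z₀ / h) ^ p ≠ 0 := by rw [hxu]; positivity
  have := ((f2.const_mul k₂).div ((hasDerivAt_const z₀ (1:ℝ)).add f2) hden)
  refine this.congr_deriv ?_
  simp only [Pi.add_apply]
  rw [hxu]
  field_simp
  nlinarith [heq, sq_nonneg (1 + u)]

/-- Given `z₀ > 0`, `k₂ > 0`, `d > 0` and a real exponent
`p > 4 z₀ d / k₂`, there exist two distinct positive reals `h₁, h₂` such that for each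
`h ∈ {h₁, h₂}`, the Hill-type function `Φ_h(z) := k₂·(z/h)^p/(1 + (z/h)^p)` has
derivative `d` at `z₀`. -/
theorem hill_function_slope_two_solutions (z₀ k₂ d p : ℝ)
    (hz₀ : 0 < z₀) (hk₂ : 0 < k₂) (hd : 0 < d) (hp : 4 * z₀ * d / k₂ < p) :
    ∃ h₁ h₂ : ℝ, 0 < h₁ ∧ 0 < h₂ ∧ h₁ ≠ h₂ ∧
      ∀ h ∈ ({h₁, h₂} : Set ℝ),
        HasDerivAt (fun z : ℝ => k₂ * (z / h) ^ p / (1 + (z / h) ^ p)) d z₀ := by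
  have hkp : 4 * z₀ * d < k₂ * p := by
    have := (div_lt_iff₀ hk₂).mp hp
    linarith
  have hppos : 0 < p := by
    have h4 : 0 < 4 * z₀ * d / k₂ := by positivity
    linarith
  have hkppos : 0 < k₂ * p := mul_pos hk₂ hppos
  have hinner : 0 < k₂ * p * (k₂ * p - 4 * d * z₀) :=
    mul_pos hkppos (by linarith)
  set s : ℝ := k₂ * p - 2 * d * z₀ with hs
  set D : ℝ := Real.sqrt (k₂ * p * (k₂ * p - 4 * d * z₀)) with hDdef
  have hDnn : 0 ≤ D := Real.sqrt_nonneg _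
  have hD2 : D ^ 2 = k₂ * p * (k₂ * p - 4 * d * z₀) := Real.sq_sqrt hinner.le
  have hDpos : 0 < D := Real.sqrt_pos.mpr hinner
  have hspos : 0 < s := by rw [hs]; nlinarith
  have hsq : s ^ 2 - D ^ 2 = (2 * d * z₀) ^ 2 := by rw [hD2, hs]; ring
  have hqpos : (0:ℝ) < 2 * d * z₀ := by positivity
  have hsD : D < s := by nlinarith [mul_pos hqpos hqpos]
  set u₁ : ℝ := (s + D) / (2 * d * z₀) with hu1
  set u₂ : ℝ := (s - D) / (2 * d * z₀) with hu2
  have hu1pos : 0 < u₁ := div_pos (by linarith) hqpos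
  have hu2pos : 0 < u₂ := div_pos (by linarith) hqpos
  have hqu1 : (2 * d * z₀) * u₁ = s + D := by rw [hu1]; field_simp
  have hqu2 : (2 * d * z₀) * u₂ = s - D := by rw [hu2]; field_simp
  have hune : u₁ ≠ u₂ := by
    intro hcon
    have : (2 * d * z₀) * u₁ = (2 * d * z₀) * u₂ := by rw [hcon]
    rw [hqu1, hqu2] at this
    linarith
  have hepq : k₂ * p = s + 2 * d * z₀ := by rw [hs]; ring
  have heq1 : k₂ * p * u₁ = d * z₀ * (1 + u₁) ^ 2 := by
    refine mul_left_cancel₀ (show (4 * d * z₀ : ℝ) ≠ 0 by positivity) ?_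
    calc (4 * d * z₀) * (k₂ * p * u₁)
        = 2 * (s + 2 * d * z₀) * ((2 * d * z₀) * u₁) := by rw [hepq]; ring
      _ = 2 * (s + 2 * d * z₀) * (s + D) := by rw [hqu1]
      _ = (2 * d * z₀ + (s + D)) ^ 2 + (s ^ 2 - D ^ 2 - (2 * d * z₀) ^ 2) := by ring
      _ = (2 * d * z₀ + (2 * d * z₀) * u₁) ^ 2 := by rw [hqu1, hsq]; ring
      _ = (4 * d * z₀) * (d * z₀ * (1 + u₁) ^ 2) := by ring
  have heq2 : k₂ * p * u₂ = d * z₀ * (1 + u₂) ^ 2 := by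
    refine mul_left_cancel₀ (show (4 * d * z₀ : ℝ) ≠ 0 by positivity) ?_
    calc (4 * d * z₀) * (k₂ * p * u₂)
        = 2 * (s + 2 * d * z₀) * ((2 * d * z₀) * u₂) := by rw [hepq]; ring
      _ = 2 * (s + 2 * d * z₀) * (s - D) := by rw [hqu2]
      _ = (2 * d * z₀ + (s - D)) ^ 2 + (s ^ 2 - D ^ 2 - (2 * d * z₀) ^ 2) := by ring
      _ = (2 * d * z₀ + (2 * d * z₀) * u₂) ^ 2 := by rw [hqu2, hsq]; ring
      _ = (4 * d * z₀) * (d * z₀ * (1 + u₂) ^ 2) := by ring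
  refine ⟨z₀ / u₁ ^ p⁻¹, z₀ / u₂ ^ p⁻¹,
    div_pos hz₀ (Real.rpow_pos_of_pos hu1pos _),
    div_pos hz₀ (Real.rpow_pos_of_pos hu2pos _), ?_, ?_⟩
  · intro hcon
    apply hune
    have hA := Real.rpow_pos_of_pos hu1pos p⁻¹
    have hB := Real.rpow_pos_of_pos hu2pos p⁻¹
    rw [div_eq_div_iff hA.ne' hB.ne'] at hcon
    have h1 : u₁ ^ p⁻¹ = u₂ ^ p⁻¹ :=
      (mul_left_cancel₀ hz₀.ne' (by linarith)).symm
    calc u₁ = (u₁ ^ p⁻¹) ^ p := by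
            rw [← Real.rpow_mul hu1pos.le, inv_mul_cancel₀ hppos.ne', Real.rpow_one]
      _ = (u₂ ^ p⁻¹) ^ p := by rw [h1]
      _ = u₂ := by
            rw [← Real.rpow_mul hu2pos.le, inv_mul_cancel₀ hppos.ne', Real.rpow_one]
  · rintro h (rfl | rfl)
    · exact hill_aux z₀ k₂ d p u₁ hz₀ hk₂ hd hppos hu1pos heq1
    · exact hill_aux z₀ k₂ d p u₂ hz₀ hk₂ hd hppos hu2pos heq2
end

section
/- Let a₁, a₂, a₃ be pairwise distinct positive reals, g₁, g₂ > 0, A = [[−a₁,0,0],[g₁,−a₂,0],[0,g₂,−a₃]], B = (1,0,0)ᵀ, C = (0,0,1). Let Φ : ℝ → ℝ satisfy Φ₁ ≤ Φ(z) ≤ Φ₂ for all z with 0 < Φ₁ ≤ Φ₂, and let F : ℝ → ℝ satisfy 0 < F₁ ≤ F(z) ≤ F₂ for all z. Define Q : ℝ³ → ℝ³ by Q(ξ) = exp(Φ(C·ξ)·A)(ξ + F(C·ξ)·B). Then for every initial vector ξ ∈ ℝ³, the forward orbit { Qⁿ(ξ) : n ∈ ℕ } is a bounded subset of ℝ³.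 -/
set_option maxHeartbeats 1000000


open Matrix

/-- Boundedness of solutions of the impulsive Goodwin's oscillator: with
`A = [[−a₁,0,0],[g₁,−a₂,0],[0,g₂,−a₃]]` (pairwise distinct positive `a₁,a₂,a₃`,
`g₁,g₂ > 0`), `B = (1,0,0)ᵀ`, `C·ξ = ξ 2`, `Φ` bounded between positive constants, `F`
bounded between positive constants, and `Q(ξ) = exp(Φ(C·ξ)·A)(ξ + F(C·ξ)·B)`, the forward
orbit `{Qⁿ(ξ) : n ∈ ℕ}` of every `ξ ∈ ℝ³` is a bounded subset of `ℝ³`. -/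
theorem igo_orbits_bounded (a₁ a₂ a₃ g₁ g₂ : ℝ)
    (ha₁ : 0 < a₁) (ha₂ : 0 < a₂) (ha₃ : 0 < a₃)
    (h12 : a₁ ≠ a₂) (h13 : a₁ ≠ a₃) (h23 : a₂ ≠ a₃)
    (hg₁ : 0 < g₁) (hg₂ : 0 < g₂)
    (A : Matrix (Fin 3) (Fin 3) ℝ)
    (hA : A = !![-a₁, 0, 0; g₁, -a₂, 0; 0, g₂, -a₃])
    (B : Fin 3 → ℝ) (hB : B = ![1, 0, 0])
    (Φ F : ℝ → ℝ) (Φ₁ Φ₂ F₁ F₂ : ℝ)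
    (hΦ₁ : 0 < Φ₁) (hΦ₁₂ : Φ₁ ≤ Φ₂) (hΦbound : ∀ z : ℝ, Φ₁ ≤ Φ z ∧ Φ z ≤ Φ₂)
    (hF₁ : 0 < F₁) (hF₁₂ : F₁ ≤ F₂) (hFbound : ∀ z : ℝ, F₁ ≤ F z ∧ F z ≤ F₂)
    (Q : (Fin 3 → ℝ) → (Fin 3 → ℝ))
    (hQ : Q = fun ξ => (NormedSpace.exp (Φ (ξ 2) • A)).mulVec (ξ + F (ξ 2) • B))
    (ξ : Fin 3 → ℝ) :
    Bornology.IsBounded (Set.range fun n : ℕ => Q^[n] ξ) := by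
  have hb12 : a₂ - a₁ ≠ 0 := sub_ne_zero.mpr (Ne.symm h12)
  have hb13 : a₃ - a₁ ≠ 0 := sub_ne_zero.mpr (Ne.symm h13)
  have hb23 : a₃ - a₂ ≠ 0 := sub_ne_zero.mpr (Ne.symm h23)
  set q1 := g₁ / (a₂ - a₁) with hq1
  set q2 := g₂ / (a₃ - a₂) with hq2
  set r := g₁ * g₂ / ((a₂ - a₁) * (a₃ - a₁)) with hr
  set P : Matrix (Fin 3) (Fin 3) ℝ := !![1,0,0; q1,1,0; r,q2,1] with hP
  set Pv : Matrix (Fin 3) (Fin 3) ℝ := !![1,0,0; -q1,1,0; q1*q2 - r, -q2, 1] with hPv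
  have hPPv : P * Pv = 1 := by
    ext i j
    fin_cases i <;> fin_cases j <;>
      · simp [hq1, hq2, hr, hP, hPv, Matrix.mul_apply, Fin.sum_univ_three, Matrix.one_apply]
        try field_simp
        try ring
  have hPvP : Pv * P = 1 := by
    ext i j
    fin_cases i <;> fin_cases j <;>
      · simp [hq1, hq2, hr, hP, hPv, Matrix.mul_apply, Fin.sum_univ_three, Matrix.one_apply]
        try field_simp
        try ring
  set dv : Fin 3 → ℝ := ![a₁, a₂, a₃] with hdv
  set D : Matrix (Fin 3) (Fin 3) ℝ := Matrix.diagonal (fun i => -(dv i)) with hD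
  have hAP : A * P = P * D := by
    ext i j
    fin_cases i <;> fin_cases j <;>
      · simp [hq1, hq2, hr, hA, hP, hD, hdv, Matrix.mul_apply, Fin.sum_univ_three, Matrix.diagonal]
        try field_simp
        try field_simp
        try ring
  have hconj : A = P * D * Pv := by
    calc A = A * (P * Pv) := by rw [hPPv, mul_one]
    _ = (A * P) * Pv := by rw [mul_assoc]
    _ = P * D * Pv := by rw [hAP]
  set U : (Matrix (Fin 3) (Fin 3) ℝ)ˣ := ⟨P, Pv, hPPv, hPvP⟩ with hU
  have hexp : ∀ τ : ℝ, NormedSpace.exp (τ • A)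
      = P * Matrix.diagonal (fun i => Real.exp (τ * (-(dv i)))) * Pv := by
    intro τ
    have h1 : τ • A = (U : Matrix (Fin 3) (Fin 3) ℝ) * (τ • D) *
        ((U⁻¹ : (Matrix (Fin 3) (Fin 3) ℝ)ˣ) : Matrix (Fin 3) (Fin 3) ℝ) := by
      have hUc : (U : Matrix (Fin 3) (Fin 3) ℝ) = P := rfl
      have hUic : ((U⁻¹ : (Matrix (Fin 3) (Fin 3) ℝ)ˣ) : Matrix (Fin 3) (Fin 3) ℝ) = Pv := rfl
      rw [hUc, hUic, mul_smul_comm, smul_mul_assoc, ← hconj]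
    rw [h1, Matrix.exp_units_conj]
    have h2 : τ • D = Matrix.diagonal (fun i => τ * (-(dv i))) := by
      rw [hD, ← Matrix.diagonal_smul]
      rfl
    have h3 : NormedSpace.exp (τ • D) = Matrix.diagonal (fun i => Real.exp (τ * (-(dv i)))) := by
      rw [h2, Matrix.exp_diagonal]
      congr 1
      rw [Pi.exp_def]
      funext i
      rw [Real.exp_eq_exp_ℝ]
    rw [h3]
    rfl
  set amin : ℝ := min a₁ (min a₂ a₃) with hamin
  have haminpos : 0 < amin := lt_min ha₁ (lt_min ha₂ ha₃)
  have hdmin : ∀ i, amin ≤ dv i := by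
    intro i
    fin_cases i
    · exact min_le_left _ _
    · exact le_trans (min_le_right _ _) (min_le_left _ _)
    · exact le_trans (min_le_right _ _) (min_le_right _ _)
  set ρ : ℝ := Real.exp (-(Φ₁ * amin)) with hρ
  have hρpos : 0 < ρ := Real.exp_pos _
  have hρlt : ρ < 1 := by
    rw [hρ, Real.exp_lt_one_iff]
    exact neg_neg_iff_pos.mpr (mul_pos hΦ₁ haminpos)
  have hdiagbound : ∀ τ : ℝ, Φ₁ ≤ τ → ∀ i, |Real.exp (τ * (-(dv i)))| ≤ ρ := by
    intro τ hτ i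
    rw [abs_of_pos (Real.exp_pos _), hρ]
    apply Real.exp_le_exp.mpr
    have h1 : Φ₁ * amin ≤ τ * dv i :=
      mul_le_mul hτ (hdmin i) haminpos.le (le_trans hΦ₁.le hτ)
    linarith
  -- key step in diagonalizing coordinates
  have hstep : ∀ w : Fin 3 → ℝ, Pv.mulVec (Q w) =
      (Matrix.diagonal (fun i => Real.exp (Φ (w 2) * (-(dv i))))).mulVec
        (Pv.mulVec w + F (w 2) • Pv.mulVec B) := by
    intro w
    rw [hQ]
    simp only
    rw [hexp (Φ (w 2)), Matrix.mulVec_mulVec]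
    have hmm : Pv * (P * Matrix.diagonal (fun i => Real.exp (Φ (w 2) * (-(dv i)))) * Pv)
        = Matrix.diagonal (fun i => Real.exp (Φ (w 2) * (-(dv i)))) * Pv := by
      rw [← mul_assoc, ← mul_assoc, hPvP, one_mul]
    rw [hmm, ← Matrix.mulVec_mulVec, Matrix.mulVec_add, Matrix.mulVec_smul]
  have hEnorm : ∀ (e v : Fin 3 → ℝ), (∀ i, |e i| ≤ ρ) →
      ‖(Matrix.diagonal e).mulVec v‖ ≤ ρ * ‖v‖ := by
    intro e v he
    rw [pi_norm_le_iff_of_nonneg (by positivity)]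
    intro i
    rw [Matrix.mulVec_diagonal]
    calc ‖e i * v i‖ = |e i| * ‖v i‖ := by rw [Real.norm_eq_abs, abs_mul]; rfl
    _ ≤ ρ * ‖v‖ :=
      mul_le_mul (he i) (norm_le_pi_norm v i) (norm_nonneg _) (le_trans (abs_nonneg _) (he i))
  set c : ℝ := F₂ * ‖Pv.mulVec B‖ with hc
  have hc0 : 0 ≤ c := mul_nonneg (le_trans hF₁.le hF₁₂) (norm_nonneg _)
  have hnormstep : ∀ w : Fin 3 → ℝ, ‖Pv.mulVec (Q w)‖ ≤ ρ * (‖Pv.mulVec w‖ + c) := by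
    intro w
    rw [hstep w]
    refine le_trans (hEnorm _ _ (fun i => hdiagbound _ (hΦbound (w 2)).1 i)) ?_
    apply mul_le_mul_of_nonneg_left _ hρpos.le
    refine le_trans (norm_add_le _ _) ?_
    have : ‖F (w 2) • Pv.mulVec B‖ ≤ c := by
      rw [norm_smul, Real.norm_eq_abs, abs_of_pos (lt_of_lt_of_le hF₁ (hFbound (w 2)).1), hc]
      exact mul_le_mul_of_nonneg_right (hFbound (w 2)).2 (norm_nonneg _)
    linarith
  set M : ℝ := max ‖Pv.mulVec ξ‖ (ρ * c / (1 - ρ)) with hM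
  have hM0 : 0 ≤ M := le_trans (norm_nonneg _) (le_max_left _ _)
  have hMc : ρ * c ≤ M * (1 - ρ) := by
    have h1 : ρ * c / (1 - ρ) ≤ M := le_max_right _ _
    have h2 : (0:ℝ) < 1 - ρ := by linarith
    calc ρ * c = (ρ * c / (1 - ρ)) * (1 - ρ) := by field_simp
    _ ≤ M * (1 - ρ) := mul_le_mul_of_nonneg_right h1 h2.le
  have hbound : ∀ n : ℕ, ‖Pv.mulVec (Q^[n] ξ)‖ ≤ M := by
    intro n
    induction n with
    | zero => rw [Function.iterate_zero_apply]; exact le_max_left _ _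
    | succ n ih =>
      rw [Function.iterate_succ_apply']
      refine le_trans (hnormstep _) ?_
      have h1 : ρ * (‖Pv.mulVec (Q^[n] ξ)‖ + c) ≤ ρ * (M + c) := by
        apply mul_le_mul_of_nonneg_left _ hρpos.le
        linarith
      nlinarith
  -- transfer back through P
  set L : (Fin 3 → ℝ) →L[ℝ] (Fin 3 → ℝ) :=
    LinearMap.toContinuousLinearMap (Matrix.mulVecLin P) with hL
  rw [isBounded_iff_forall_norm_le]
  refine ⟨‖L‖ * M, ?_⟩
  rintro x ⟨n, rfl⟩
  have hx : Q^[n] ξ = L (Pv.mulVec (Q^[n] ξ)) := by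
    show Q^[n] ξ = P.mulVec (Pv.mulVec (Q^[n] ξ))
    rw [Matrix.mulVec_mulVec, hPPv, Matrix.one_mulVec]
  calc ‖Q^[n] ξ‖ = ‖L (Pv.mulVec (Q^[n] ξ))‖ := by rw [← hx]
  _ ≤ ‖L‖ * ‖Pv.mulVec (Q^[n] ξ)‖ := L.le_opNorm _
  _ ≤ ‖L‖ * M := mul_le_mul_of_nonneg_left (hbound n) (norm_nonneg _)
end
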